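/- arXiv:1403.5605 — 2 statements merged into one kernel-verified Lean document; each statement's English description precedes it below -/
import Mathlib

section
/- The BWBGME algorithm satisfies the Deadlock Freedom property: in every execution in which no process stays in the critical section forever, if one or more processes are forever trying to enter their critical section with no success for any of them, then there exists a process that enters the critical section infinitely often; equivalently, no such execution exists. -/
/-! ## Model of the Black and White Bakery GME (BWBGME) algorithm -/

inductive Color : Type
  | black
  | white
  deriving DecidableEq

/-- The opposite color. -/
def Color.opp : Color → Color
  | .black => .white
  | .white => .black

/-- A token: a session number, a color in {black, white, ⊥} (`none` is ⊥) and a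
token number. -/
structure BWTok where
  session : ℕ
  color : Option Color
  number : ℕ
  deriving DecidableEq

def BWTok.init : BWTok := ⟨0, none, 0⟩

/-- Program counter of a process in the BWBGME algorithm.  The doorway is
`d1 s` (Token[i]:=(s,⊥,0)), `d2 s` (Choosing[i]:=true, line 4),
`d3 s` (mycolor:=GlobalColor, line 5), `scan s c j m` (the loop computing the max `m`
of the token numbers of conflicting processes with token color `c`; `j` is the next
index to read), `d4 s c m` (Token[i]:=(s,c,m), where `m` is the final mynumber) and
`d5 s c m` (Choosing[i]:=false).  The waiting room iterates, for each `j`: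
`w1` (wait until Choosing[j]=false or Token[j].session=s), `wB` (the branch reading
Token[j].color), and the busy-waits `wSame` / `wDiff`.  The exit section is the scan
`x1 s c m j` looking for an active process of the opposite color (entered only when
`m ≠ 1`), `xFlip s c m` (GlobalColor := opposite of `c`) and `x2` (Token[i]:=(0,⊥,0)). -/
inductive BWPc : Type
  | remainder
  | d1 (s : ℕ)
  | d2 (s : ℕ)
  | d3 (s : ℕ)
  | scan (s : ℕ) (c : Color) (j : ℕ) (m : ℕ)
  | d4 (s : ℕ) (c : Color) (m : ℕ)
  | d5 (s : ℕ) (c : Color) (m : ℕ)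
  | w1 (s : ℕ) (c : Color) (m : ℕ) (j : ℕ)
  | wB (s : ℕ) (c : Color) (m : ℕ) (j : ℕ)
  | wSame (s : ℕ) (c : Color) (m : ℕ) (j : ℕ)
  | wDiff (s : ℕ) (c : Color) (m : ℕ) (j : ℕ)
  | cs (s : ℕ) (c : Color) (m : ℕ)
  | x1 (s : ℕ) (c : Color) (m : ℕ) (j : ℕ)
  | xFlip (s : ℕ) (c : Color) (m : ℕ)
  | x2
  deriving DecidableEq

/-- Global state: GlobalColor, the shared arrays Token and Choosing, and the
control state of each process. -/
structure BWState (N : ℕ) where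
  gcolor : Color
  token : Fin N → BWTok
  choosing : Fin N → Bool
  pc : Fin N → BWPc

/-- Initial state; GlobalColor is initialized arbitrarily to `c0`. -/
def bwInit (N : ℕ) (c0 : Color) : BWState N :=
  { gcolor := c0, token := fun _ => BWTok.init, choosing := fun _ => false,
    pc := fun _ => BWPc.remainder }

/-- One atomic step of process `i` of the BWBGME algorithm. -/
def bwStep {N : ℕ} (st : BWState N) (i : Fin N) (st' : BWState N) : Prop :=
  match st.pc i with
  | .remainder =>
      st' = st ∨ ∃ s : ℕ, 0 < s ∧ st' = { st with pc := Function.update st.pc i (.d1 s) }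
  | .d1 s =>
      st' = { st with token := Function.update st.token i ⟨s, none, 0⟩,
                      pc := Function.update st.pc i (.d2 s) }
  | .d2 s =>
      st' = { st with choosing := Function.update st.choosing i true,
                      pc := Function.update st.pc i (.d3 s) }
  | .d3 s =>
      st' = { st with pc := Function.update st.pc i (.scan s st.gcolor 0 0) }
  | .scan s c j m =>
      if h : j < N then
        st' = { st with pc := Function.update st.pc i (.scan s c (j+1)
                  (if (st.token ⟨j, h⟩).color = some c ∧ (st.token ⟨j, h⟩).session ≠ 0 ∧
                      (st.token ⟨j, h⟩).session ≠ s
                   then max m (st.token ⟨j, h⟩).number else m)) }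
      else
        st' = { st with pc := Function.update st.pc i (.d4 s c (m+1)) }
  | .d4 s c m =>
      st' = { st with token := Function.update st.token i ⟨s, some c, m⟩,
                      pc := Function.update st.pc i (.d5 s c m) }
  | .d5 s c m =>
      st' = { st with choosing := Function.update st.choosing i false,
                      pc := Function.update st.pc i (.w1 s c m 0) }
  | .w1 s c m j =>
      if h : j < N then
        if st.choosing ⟨j, h⟩ = false ∨ (st.token ⟨j, h⟩).session = s then
          st' = { st with pc := Function.update st.pc i (.wB s c m j) }
        else st' = st
      else
        st' = { st with pc := Function.update st.pc i (.cs s c m) }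
  | .wB s c m j =>
      if h : j < N then
        if (st.token ⟨j, h⟩).color = some c then
          st' = { st with pc := Function.update st.pc i (.wSame s c m j) }
        else
          st' = { st with pc := Function.update st.pc i (.wDiff s c m j) }
      else st' = st
  | .wSame s c m j =>
      if h : j < N then
        if (m < (st.token ⟨j, h⟩).number ∨ (m = (st.token ⟨j, h⟩).number ∧ i.val < j)) ∨
            (st.token ⟨j, h⟩).color ≠ some c ∨ (st.token ⟨j, h⟩).session = 0 ∨
            (st.token ⟨j, h⟩).session = s then
          st' = { st with pc := Function.update st.pc i (.w1 s c m (j+1)) }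
        else st' = st
      else st' = st
  | .wDiff s c m j =>
      if h : j < N then
        if st.gcolor ≠ c ∨ (st.token ⟨j, h⟩).color = some c ∨
            (st.token ⟨j, h⟩).session = 0 ∨ (st.token ⟨j, h⟩).session = s then
          st' = { st with pc := Function.update st.pc i (.w1 s c m (j+1)) }
        else st' = st
      else st' = st
  | .cs s c m =>
      st' = st ∨
        st' = { st with pc :=
                  Function.update st.pc i (if m = 1 then BWPc.x2 else BWPc.x1 s c m 0) }
  | .x1 s c m j =>
      if h : j < N then
        if (st.token ⟨j, h⟩).session ≠ 0 ∧ (st.token ⟨j, h⟩).color = some c.opp then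
          st' = { st with pc := Function.update st.pc i .x2 }
        else
          st' = { st with pc := Function.update st.pc i (.x1 s c m (j+1)) }
      else
        st' = { st with pc := Function.update st.pc i (.xFlip s c m) }
  | .xFlip _ c _ =>
      st' = { st with gcolor := c.opp, pc := Function.update st.pc i .x2 }
  | .x2 =>
      st' = { st with token := Function.update st.token i BWTok.init,
                      pc := Function.update st.pc i .remainder }

/-- An execution of the BWBGME algorithm: an interleaving of atomic steps from an
initial state (with arbitrary GlobalColor) in which every process outside its
remainder section eventually takes its next step. -/
structure BWExec (N : ℕ) where
  state : ℕ → BWState N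
  sched : ℕ → Fin N
  init : ∃ c0, state 0 = bwInit N c0
  step : ∀ n, bwStep (state n) (sched n) (state (n + 1))
  fair : ∀ (i : Fin N) (n : ℕ), (state n).pc i ≠ BWPc.remainder →
           ∃ m, n ≤ m ∧ sched m = i

/-- Process `i` is in the critical section. -/
def bwInCS {N : ℕ} (st : BWState N) (i : Fin N) : Prop :=
  ∃ s c m, st.pc i = BWPc.cs s c m

/-- Process `i` is in the entry section (doorway or waiting room). -/
def bwInEntry {N : ℕ} (st : BWState N) (i : Fin N) : Prop :=
  match st.pc i with
  | .remainder => False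
  | .cs _ _ _ => False
  | .x1 _ _ _ _ => False
  | .xFlip _ _ _ => False
  | .x2 => False
  | _ => True

/-- At step `n`, process `i` leaves the remainder and enters the doorway,
requesting session `s`. -/
def bwEntersDoorway {N : ℕ} (e : BWExec N) (i : Fin N) (s : ℕ) (n : ℕ) : Prop :=
  (e.state n).pc i = BWPc.remainder ∧ (e.state (n+1)).pc i = BWPc.d1 s

/-- At step `n`, process `i` completes its doorway (executes Choosing[i]:=false),
having requested session `s` and chosen token color `c` and token number `m`. -/
def bwCompletesDoorway {N : ℕ} (e : BWExec N) (i : Fin N) (s : ℕ) (c : Color) (m : ℕ)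
    (n : ℕ) : Prop :=
  (e.state n).pc i = BWPc.d5 s c m ∧ (e.state (n+1)).pc i = BWPc.w1 s c m 0

/-- At step `n`, process `i` executes line 5, reading GlobalColor = `c`
(its invocation requests session `s`). -/
def bwLine5 {N : ℕ} (e : BWExec N) (i : Fin N) (s : ℕ) (c : Color) (n : ℕ) : Prop :=
  (e.state n).pc i = BWPc.d3 s ∧ (e.state (n+1)).pc i = BWPc.scan s c 0 0

/-- At step `n`, process `i` executes line 4 (Choosing[i]:=true). -/
def bwLine4 {N : ℕ} (e : BWExec N) (i : Fin N) (s : ℕ) (n : ℕ) : Prop :=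
  (e.state n).pc i = BWPc.d2 s ∧ (e.state (n+1)).pc i = BWPc.d3 s

/-- At step `n`, process `i` enters the critical section. -/
def bwEntersCS {N : ℕ} (e : BWExec N) (i : Fin N) (n : ℕ) : Prop :=
  ¬ bwInCS (e.state n) i ∧ bwInCS (e.state (n+1)) i

/-- At step `n`, process `i` finishes (leaves) the critical section. -/
def bwLeavesCS {N : ℕ} (e : BWExec N) (i : Fin N) (n : ℕ) : Prop :=
  bwInCS (e.state n) i ∧ ¬ bwInCS (e.state (n+1)) i

/-- At step `n`, process `i` completes its exit section
(executes Token[i]:=(0,⊥,0) and returns to the remainder section). -/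
def bwCompletesExit {N : ℕ} (e : BWExec N) (i : Fin N) (n : ℕ) : Prop :=
  (e.state n).pc i = BWPc.x2 ∧ (e.state (n+1)).pc i = BWPc.remainder

/-- Process `i` does not pass through the remainder section during `(a, b]`
(so times `a` and `b` belong to the same invocation of `i`). -/
def bwActiveThrough {N : ℕ} (e : BWExec N) (i : Fin N) (a b : ℕ) : Prop :=
  ∀ k, a < k → k ≤ b → (e.state k).pc i ≠ BWPc.remainder

/-- GlobalColor is flipped at step `n`: the step is a write that changes its value. -/
def bwFlipAt {N : ℕ} (e : BWExec N) (n : ℕ) : Prop :=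
  (e.state (n+1)).gcolor ≠ (e.state n).gcolor

section Aux
variable {N : ℕ}

/-- Rank of a program counter, used as a termination measure after the last CS entry. -/
def bwRank (N : ℕ) : BWPc → ℕ
  | .remainder => 4*N+10
  | .d1 _ => 4*N+9
  | .d2 _ => 4*N+8
  | .d3 _ => 4*N+7
  | .scan _ _ j _ => 3*N+6 + (N - j)
  | .d4 _ _ _ => 3*N+5
  | .d5 _ _ _ => 3*N+4
  | .w1 _ _ _ j => 3*(N-j)+3
  | .wB _ _ _ j => 3*(N-j)+2
  | .wSame _ _ _ j => 3*(N-j)+1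
  | .wDiff _ _ _ j => 3*(N-j)+1
  | .cs _ _ _ => 6*N+20
  | .x1 _ _ _ j => 4*N+13 + (N-j)
  | .xFlip _ _ _ => 4*N+12
  | .x2 => 4*N+11

def bwMeas (st : BWState N) : ℕ := ∑ x, bwRank N (st.pc x)

lemma sum_rank_update_lt {f : Fin N → BWPc} {k : Fin N} {p : BWPc}
    (h : bwRank N p < bwRank N (f k)) :
    (∑ x, bwRank N (Function.update f k p x)) < ∑ x, bwRank N (f x) := by
  refine Finset.sum_lt_sum (fun j _ => ?_) ⟨k, Finset.mem_univ k, by simpa using h⟩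
  rcases eq_or_ne j k with rfl | hne
  · simpa using le_of_lt h
  · simp [Function.update_of_ne hne]

lemma bw_step_meas {st st' : BWState N} {k : Fin N} (h : bwStep st k st')
    (hne : ¬ (¬ bwInCS st k ∧ bwInCS st' k)) : st' = st ∨ bwMeas st' < bwMeas st := by
  rw [bwStep] at h
  split at h
  -- remainder
  · rename_i hpc
    rcases h with rfl | ⟨s, hs, rfl⟩
    · exact Or.inl rfl
    · exact Or.inr (sum_rank_update_lt (by rw [hpc]; simp only [bwRank]; omega))
  -- d1 d2 d3
  · rename_i s hpc; subst h; exact Or.inr (sum_rank_update_lt (by rw [hpc]; simp only [bwRank]; omega))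
  · rename_i s hpc; subst h; exact Or.inr (sum_rank_update_lt (by rw [hpc]; simp only [bwRank]; omega))
  · rename_i s hpc; subst h; exact Or.inr (sum_rank_update_lt (by rw [hpc]; simp only [bwRank]; omega))
  -- scan
  · rename_i s c j m hpc
    split at h <;> (subst h; exact Or.inr (sum_rank_update_lt (by rw [hpc]; simp only [bwRank]; omega)))
  -- d4 d5
  · rename_i s c m hpc; subst h; exact Or.inr (sum_rank_update_lt (by rw [hpc]; simp only [bwRank]; omega))
  · rename_i s c m hpc; subst h; exact Or.inr (sum_rank_update_lt (by rw [hpc]; simp only [bwRank]; omega))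
  -- w1
  · rename_i s c m j hpc
    split at h
    · split at h
      · subst h; exact Or.inr (sum_rank_update_lt (by rw [hpc]; simp only [bwRank]; omega))
      · exact Or.inl h
    · exfalso
      apply hne
      refine ⟨?_, s, c, m, by subst h; simp⟩
      rintro ⟨a, b, cc, hc⟩
      rw [hpc] at hc
      simp at hc
  -- wB
  · rename_i s c m j hpc
    split at h
    · split at h <;> (subst h; exact Or.inr (sum_rank_update_lt (by rw [hpc]; simp only [bwRank]; omega)))
    · exact Or.inl h
  -- wSame
  · rename_i s c m j hpc
    split at h
    · split at h
      · subst h; exact Or.inr (sum_rank_update_lt (by rw [hpc]; simp only [bwRank]; omega))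
      · exact Or.inl h
    · exact Or.inl h
  -- wDiff
  · rename_i s c m j hpc
    split at h
    · split at h
      · subst h; exact Or.inr (sum_rank_update_lt (by rw [hpc]; simp only [bwRank]; omega))
      · exact Or.inl h
    · exact Or.inl h
  -- cs
  · rename_i s c m hpc
    rcases h with rfl | rfl
    · exact Or.inl rfl
    · refine Or.inr (sum_rank_update_lt ?_)
      rw [hpc]
      split <;> simp only [bwRank] <;> omega
  -- x1
  · rename_i s c m j hpc
    split at h
    · split at h <;> (subst h; exact Or.inr (sum_rank_update_lt (by rw [hpc]; simp only [bwRank]; omega)))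
    · subst h; exact Or.inr (sum_rank_update_lt (by rw [hpc]; simp only [bwRank]; omega))
  -- xFlip x2
  · rename_i s c m hpc; subst h; exact Or.inr (sum_rank_update_lt (by rw [hpc]; simp only [bwRank]; omega))
  · rename_i hpc; subst h; exact Or.inr (sum_rank_update_lt (by rw [hpc]; simp only [bwRank]; omega))


/-- Per-process invariant relating the pc to the token and choosing flag. -/
def InvP (N : ℕ) : BWPc → BWTok → Bool → Prop
  | .remainder, tok, ch => tok = BWTok.init ∧ ch = false
  | .d5 s c m, tok, _ => tok = ⟨s, some c, m⟩
  | .w1 s c m _, tok, ch => tok = ⟨s, some c, m⟩ ∧ ch = false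
  | .wB s c m j, tok, ch => tok = ⟨s, some c, m⟩ ∧ ch = false ∧ j < N
  | .wSame s c m j, tok, ch => tok = ⟨s, some c, m⟩ ∧ ch = false ∧ j < N
  | .wDiff s c m j, tok, ch => tok = ⟨s, some c, m⟩ ∧ ch = false ∧ j < N
  | .cs s c m, tok, ch => tok = ⟨s, some c, m⟩ ∧ ch = false
  | .x1 s c m _, tok, ch => tok = ⟨s, some c, m⟩ ∧ ch = false
  | .xFlip s c m, tok, ch => tok = ⟨s, some c, m⟩ ∧ ch = false
  | .x2, _, ch => ch = false
  | _, _, _ => True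

def bwInv (st : BWState N) : Prop := ∀ x, InvP N (st.pc x) (st.token x) (st.choosing x)

lemma bwInv_of (st : BWState N) (k : Fin N) (g : Color) (p : BWPc) (tok : BWTok)
    (ch : Bool) (hi : bwInv st) (hP : InvP N p tok ch) :
    bwInv ⟨g, Function.update st.token k tok, Function.update st.choosing k ch,
      Function.update st.pc k p⟩ := by
  intro x
  rcases eq_or_ne x k with rfl | hx
  · simpa using hP
  · simpa [Function.update_of_ne hx] using hi x

lemma bw_inv_step {st st' : BWState N} {k : Fin N} (h : bwStep st k st')
    (hi : bwInv st) : bwInv st' := by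
  have hk := hi k
  rw [bwStep] at h
  split at h
  -- remainder
  · rename_i hpc
    rcases h with rfl | ⟨s, hs, rfl⟩
    · exact hi
    · simpa [Function.update_eq_self] using
        bwInv_of st k st.gcolor (BWPc.d1 s) (st.token k) (st.choosing k) hi trivial
  -- d1
  · rename_i s hpc
    subst h
    simpa [Function.update_eq_self] using
      bwInv_of st k st.gcolor (BWPc.d2 s) ⟨s, none, 0⟩ (st.choosing k) hi trivial
  -- d2
  · rename_i s hpc
    subst h
    simpa [Function.update_eq_self] using
      bwInv_of st k st.gcolor (BWPc.d3 s) (st.token k) true hi trivial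
  -- d3
  · rename_i s hpc
    subst h
    simpa [Function.update_eq_self] using
      bwInv_of st k st.gcolor (BWPc.scan s st.gcolor 0 0) (st.token k) (st.choosing k) hi trivial
  -- scan
  · rename_i s c j m hpc
    split at h <;> subst h
    · simpa [Function.update_eq_self] using
        bwInv_of st k st.gcolor (BWPc.scan s c (j+1) _) (st.token k) (st.choosing k) hi trivial
    · simpa [Function.update_eq_self] using
        bwInv_of st k st.gcolor (BWPc.d4 s c (m+1)) (st.token k) (st.choosing k) hi trivial
  -- d4
  · rename_i s c m hpc
    subst h
    simpa [Function.update_eq_self] using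
      bwInv_of st k st.gcolor (BWPc.d5 s c m) ⟨s, some c, m⟩ (st.choosing k) hi rfl
  -- d5
  · rename_i s c m hpc
    rw [hpc] at hk
    subst h
    simpa [Function.update_eq_self] using
      bwInv_of st k st.gcolor (BWPc.w1 s c m 0) (st.token k) false hi ⟨hk, rfl⟩
  -- w1
  · rename_i s c m j hpc
    rw [hpc] at hk
    split at h
    · rename_i hj
      split at h
      · subst h
        simpa [Function.update_eq_self] using
          bwInv_of st k st.gcolor (BWPc.wB s c m j) (st.token k) (st.choosing k) hi
            ⟨hk.1, hk.2, hj⟩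
      · exact h ▸ hi
    · subst h
      simpa [Function.update_eq_self] using
        bwInv_of st k st.gcolor (BWPc.cs s c m) (st.token k) (st.choosing k) hi ⟨hk.1, hk.2⟩
  -- wB
  · rename_i s c m j hpc
    rw [hpc] at hk
    split at h
    · split at h <;> subst h
      · simpa [Function.update_eq_self] using
          bwInv_of st k st.gcolor (BWPc.wSame s c m j) (st.token k) (st.choosing k) hi hk
      · simpa [Function.update_eq_self] using
          bwInv_of st k st.gcolor (BWPc.wDiff s c m j) (st.token k) (st.choosing k) hi hk
    · exact h ▸ hi
  -- wSame
  · rename_i s c m j hpc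
    rw [hpc] at hk
    split at h
    · split at h
      · subst h
        simpa [Function.update_eq_self] using
          bwInv_of st k st.gcolor (BWPc.w1 s c m (j+1)) (st.token k) (st.choosing k) hi
            ⟨hk.1, hk.2.1⟩
      · exact h ▸ hi
    · exact h ▸ hi
  -- wDiff
  · rename_i s c m j hpc
    rw [hpc] at hk
    split at h
    · split at h
      · subst h
        simpa [Function.update_eq_self] using
          bwInv_of st k st.gcolor (BWPc.w1 s c m (j+1)) (st.token k) (st.choosing k) hi
            ⟨hk.1, hk.2.1⟩
      · exact h ▸ hi
    · exact h ▸ hi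
  -- cs
  · rename_i s c m hpc
    rw [hpc] at hk
    rcases h with rfl | rfl
    · exact hi
    · rcases eq_or_ne m 1 with rfl | hm
      · simpa [Function.update_eq_self] using
          bwInv_of st k st.gcolor BWPc.x2 (st.token k) (st.choosing k) hi hk.2
      · simp only [if_neg hm]
        simpa [Function.update_eq_self] using
          bwInv_of st k st.gcolor (BWPc.x1 s c m 0) (st.token k) (st.choosing k) hi hk
  -- x1
  · rename_i s c m j hpc
    rw [hpc] at hk
    split at h
    · split at h <;> subst h
      · simpa [Function.update_eq_self] using
          bwInv_of st k st.gcolor BWPc.x2 (st.token k) (st.choosing k) hi hk.2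
      · simpa [Function.update_eq_self] using
          bwInv_of st k st.gcolor (BWPc.x1 s c m (j+1)) (st.token k) (st.choosing k) hi hk
    · subst h
      simpa [Function.update_eq_self] using
        bwInv_of st k st.gcolor (BWPc.xFlip s c m) (st.token k) (st.choosing k) hi hk
  -- xFlip
  · rename_i s c m hpc
    rw [hpc] at hk
    subst h
    simpa [Function.update_eq_self] using
      bwInv_of st k c.opp BWPc.x2 (st.token k) (st.choosing k) hi hk.2
  -- x2
  · rename_i hpc
    rw [hpc] at hk
    subst h
    simpa [Function.update_eq_self] using
      bwInv_of st k st.gcolor BWPc.remainder BWTok.init (st.choosing k) hi ⟨rfl, hk⟩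

lemma bw_inv_all (e : BWExec N) : ∀ t, bwInv (e.state t) := by
  intro t
  induction t with
  | zero =>
      obtain ⟨c0, h0⟩ := e.init
      rw [h0]
      intro x
      simp [bwInit, InvP, BWTok.init]
  | succ t ih => exact bw_inv_step (e.step t) ih



/-- If a non-cs process self-loops, its pc is remainder or in the waiting room. -/
lemma bw_stuck_shape {S : BWState N} {k : Fin N} (h : bwStep S k S)
    (hk : InvP N (S.pc k) (S.token k) (S.choosing k))
    (hcs : ∀ s c m, S.pc k ≠ BWPc.cs s c m) :
    S.pc k = .remainder ∨ (∃ s c m j, S.pc k = .w1 s c m j) ∨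
      (∃ s c m j, S.pc k = .wSame s c m j) ∨ (∃ s c m j, S.pc k = .wDiff s c m j) := by
  rw [bwStep] at h
  split at h
  -- remainder
  · rename_i hpc
    exact Or.inl hpc
  -- d1
  · rename_i s hpc
    have := congrArg (fun t => BWState.pc t k) h
    simp [hpc] at this
  -- d2
  · rename_i s hpc
    have := congrArg (fun t => BWState.pc t k) h
    simp [hpc] at this
  -- d3
  · rename_i s hpc
    have := congrArg (fun t => BWState.pc t k) h
    simp [hpc] at this
  -- scan
  · rename_i s c j m hpc
    split at h <;>
    · have := congrArg (fun t => BWState.pc t k) h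
      simp [hpc] at this
  -- d4
  · rename_i s c m hpc
    have := congrArg (fun t => BWState.pc t k) h
    simp [hpc] at this
  -- d5
  · rename_i s c m hpc
    have := congrArg (fun t => BWState.pc t k) h
    simp [hpc] at this
  -- w1
  · rename_i s c m j hpc
    exact Or.inr (Or.inl ⟨s, c, m, j, hpc⟩)
  -- wB
  · rename_i s c m j hpc
    rw [hpc] at hk
    rw [dif_pos hk.2.2] at h
    split at h <;>
    · have := congrArg (fun t => BWState.pc t k) h
      simp [hpc] at this
  -- wSame
  · rename_i s c m j hpc
    exact Or.inr (Or.inr (Or.inl ⟨s, c, m, j, hpc⟩))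
  -- wDiff
  · rename_i s c m j hpc
    exact Or.inr (Or.inr (Or.inr ⟨s, c, m, j, hpc⟩))
  -- cs
  · rename_i s c m hpc
    exact absurd hpc (hcs s c m)
  -- x1
  · rename_i s c m j hpc
    split at h
    · split at h <;>
      · have := congrArg (fun t => BWState.pc t k) h
        simp [hpc] at this
    · have := congrArg (fun t => BWState.pc t k) h
      simp [hpc] at this
  -- xFlip
  · rename_i s c m hpc
    have := congrArg (fun t => BWState.pc t k) h
    simp [hpc] at this
  -- x2
  · rename_i hpc
    have := congrArg (fun t => BWState.pc t k) h
    simp [hpc] at this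

/-- A process cannot self-loop at `w1` once all choosing flags are false. -/
lemma bw_not_w1 {S : BWState N} {k : Fin N} {s c m j} (h : bwStep S k S)
    (hch : ∀ x, S.choosing x = false) (hpc : S.pc k = .w1 s c m j) : False := by
  rw [bwStep] at h
  simp only [hpc] at h
  by_cases hj : j < N
  · rw [dif_pos hj, if_pos (Or.inl (hch ⟨j, hj⟩))] at h
    have := congrArg (fun t => BWState.pc t k) h
    simp [hpc] at this
  · rw [dif_neg hj] at h
    have := congrArg (fun t => BWState.pc t k) h
    simp [hpc] at this

/-- Facts from a process being stuck at `wSame`. -/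
lemma bw_stuck_same {S : BWState N} {k : Fin N} {s c m j} (h : bwStep S k S)
    (hpc : S.pc k = .wSame s c m j) (hj : j < N) :
    (S.token ⟨j, hj⟩).color = some c ∧ (S.token ⟨j, hj⟩).session ≠ 0 ∧
      (S.token ⟨j, hj⟩).session ≠ s ∧ (S.token ⟨j, hj⟩).number ≤ m ∧
      (m = (S.token ⟨j, hj⟩).number → j ≤ k.val) := by
  rw [bwStep] at h
  simp only [hpc] at h
  rw [dif_pos hj] at h
  split at h
  · have := congrArg (fun t => BWState.pc t k) h
    simp [hpc] at this
  · rename_i hcond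
    push_neg at hcond
    refine ⟨hcond.2.1, hcond.2.2.1, hcond.2.2.2, ?_, ?_⟩ <;> omega

/-- Facts from a process being stuck at `wDiff`. -/
lemma bw_stuck_diff {S : BWState N} {k : Fin N} {s c m j} (h : bwStep S k S)
    (hpc : S.pc k = .wDiff s c m j) (hj : j < N) :
    S.gcolor = c ∧ (S.token ⟨j, hj⟩).color ≠ some c ∧ (S.token ⟨j, hj⟩).session ≠ 0 ∧
      (S.token ⟨j, hj⟩).session ≠ s := by
  rw [bwStep] at h
  simp only [hpc] at h
  rw [dif_pos hj] at h
  split at h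
  · have := congrArg (fun t => BWState.pc t k) h
    simp [hpc] at this
  · rename_i hcond
    push_neg at hcond
    exact ⟨hcond.1, hcond.2.1, hcond.2.2.1, hcond.2.2.2⟩



lemma bw_key_lt {N a b ja jb : ℕ} (hja : ja < N) (hjb : jb < N)
    (h : a < b ∨ (a = b ∧ ja < jb)) : a * N + ja < b * N + jb := by
  rcases h with h | ⟨rfl, h⟩
  · calc a * N + ja < a * N + N := by omega
      _ = (a + 1) * N := by ring
      _ ≤ b * N := Nat.mul_le_mul_right N h
      _ ≤ b * N + jb := Nat.le_add_right _ _
  · exact Nat.add_lt_add_left h _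

lemma bwColor_ne_opp (c : Color) : c ≠ c.opp := by cases c <;> decide

lemma bwColor_eq_opp {c d : Color} (h : c ≠ d) : c = d.opp := by
  cases c <;> cases d <;> first | rfl | exact absurd rfl h

end Aux

/-- **Deadlock freedom for the BWBGME algorithm** (property P6).  In every execution in
which no process stays in the critical section forever, if some process is forever trying
to enter its critical section (it remains in the entry section from some time `n` on,
hence without success), then some process enters the critical section infinitely often. -/
theorem bw_deadlock_freedom {N : ℕ} (e : BWExec N)
    (hncs : ∀ (i : Fin N) (n : ℕ), bwInCS (e.state n) i →
      ∃ m, n ≤ m ∧ ¬ bwInCS (e.state m) i)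
    (i : Fin N) (n : ℕ) (htry : ∀ m, n ≤ m → bwInEntry (e.state m) i) :
    ∃ k : Fin N, ∀ m : ℕ, ∃ m', m ≤ m' ∧ bwEntersCS e k m' := by
  by_contra hcon
  push_neg at hcon
  choose f hf using hcon
  set T : ℕ := max n (Finset.univ.sup f) with hT
  have hTn : n ≤ T := le_max_left _ _
  have hnoenter : ∀ t, T ≤ t → ∀ k : Fin N, ¬ bwEntersCS e k t := by
    intro t ht k hc
    have h1 : f k ≤ t :=
      le_trans (le_trans (Finset.le_sup (Finset.mem_univ k)) (le_max_right _ _)) ht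
    exact hf k t h1 hc
  have hstepmeas : ∀ t, T ≤ t →
      e.state (t+1) = e.state t ∨ bwMeas (e.state (t+1)) < bwMeas (e.state t) := by
    intro t ht
    exact bw_step_meas (e.step t) (fun hc => hnoenter t ht (e.sched t) hc)
  set g : ℕ → ℕ := fun t => bwMeas (e.state (T + t)) with hg
  have hdec : ∀ t, g (t+1) ≤ g t := by
    intro t
    rcases hstepmeas (T+t) (Nat.le_add_right _ _) with he | hlt
    · exact le_of_eq (congrArg bwMeas he)
    · exact le_of_lt hlt
  have hanti : Antitone g := antitone_nat_of_succ_le hdec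
  obtain ⟨t0, ht0⟩ := Nat.sInf_mem (⟨g 0, 0, rfl⟩ : (Set.range g).Nonempty)
  have hmin : ∀ t, g t0 ≤ g t := fun t => ht0 ▸ Nat.sInf_le ⟨t, rfl⟩
  have hconst : ∀ t, t0 ≤ t → e.state (T + t) = e.state (T + t0) := by
    intro t htt
    induction t with
    | zero => rw [Nat.le_zero.mp htt]
    | succ t ih =>
      rcases Nat.lt_or_ge t0 (t+1) with hl | hgeq
      · have hb : t0 ≤ t := by omega
        rcases hstepmeas (T+t) (Nat.le_add_right _ _) with he | hlt
        · rw [show T+(t+1) = (T+t)+1 from rfl, he, ih hb]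
        · exfalso
          have h1 : g (t+1) < g t0 := by
            have h2 : g t = g t0 := congrArg bwMeas (ih hb)
            exact lt_of_lt_of_le hlt (le_of_eq h2)
          exact absurd (hmin (t+1)) (not_le.mpr h1)
      · rw [show t0 = t + 1 by omega]
  have hstable : ∀ u, T + t0 ≤ u → e.state u = e.state (T + t0) := by
    intro u hu
    rw [show u = T + (t0 + (u - (T + t0))) by omega]
    exact hconst _ (by omega)
  -- abbreviations
  have hInv : bwInv (e.state (T + t0)) := bw_inv_all e (T + t0)
  have hloop : ∀ k : Fin N, (e.state (T + t0)).pc k ≠ .remainder →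
      bwStep (e.state (T + t0)) k (e.state (T + t0)) := by
    intro k hk
    obtain ⟨m, hm, hsm⟩ := e.fair k (T + t0) hk
    have h1 := e.step m
    rw [hsm, hstable m hm, hstable (m+1) (by omega)] at h1
    exact h1
  have hcsS : ∀ (k : Fin N) s c m, (e.state (T + t0)).pc k ≠ .cs s c m := by
    intro k s c m hp
    obtain ⟨m', hm', hn'⟩ := hncs k (T + t0) ⟨s, c, m, hp⟩
    exact hn' (by rw [hstable m' hm']; exact ⟨s, c, m, hp⟩)
  have hshape : ∀ k : Fin N, (e.state (T + t0)).pc k = .remainder ∨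
      (∃ s c m j, (e.state (T + t0)).pc k = .w1 s c m j) ∨
      (∃ s c m j, (e.state (T + t0)).pc k = .wSame s c m j) ∨
      (∃ s c m j, (e.state (T + t0)).pc k = .wDiff s c m j) := by
    intro k
    by_cases hr : (e.state (T + t0)).pc k = .remainder
    · exact Or.inl hr
    · exact bw_stuck_shape (hloop k hr) (hInv k) (hcsS k)
  have hch : ∀ x, (e.state (T + t0)).choosing x = false := by
    intro x
    have hI := hInv x
    rcases hshape x with hp | ⟨s,c,m,j,hp⟩ | ⟨s,c,m,j,hp⟩ | ⟨s,c,m,j,hp⟩ <;> rw [hp] at hI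
    · exact hI.2
    · exact hI.2
    · exact hI.2.1
    · exact hI.2.1
  have hwait : ∀ k : Fin N, (e.state (T + t0)).pc k ≠ .remainder →
      ∃ s c m j, ∃ hj : j < N, (e.state (T + t0)).token k = ⟨s, some c, m⟩ ∧
        ((e.state (T + t0)).pc k = .wSame s c m j ∨ (e.state (T + t0)).pc k = .wDiff s c m j) := by
    intro k hk
    rcases hshape k with hp | ⟨s,c,m,j,hp⟩ | ⟨s,c,m,j,hp⟩ | ⟨s,c,m,j,hp⟩
    · exact absurd hp hk
    · exact (bw_not_w1 (hloop k hk) hch hp).elim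
    · have hI := hInv k; rw [hp] at hI
      exact ⟨s, c, m, j, hI.2.2, hI.1, Or.inl hp⟩
    · have hI := hInv k; rw [hp] at hI
      exact ⟨s, c, m, j, hI.2.2, hI.1, Or.inr hp⟩
  have hnr_of_sess : ∀ k : Fin N, ((e.state (T + t0)).token k).session ≠ 0 →
      (e.state (T + t0)).pc k ≠ .remainder := by
    intro k hk0 hr
    have hI := hInv k; rw [hr] at hI
    rw [hI.1] at hk0
    exact hk0 rfl
  -- key
  set key : Fin N → ℕ := fun k => ((e.state (T + t0)).token k).number * N + k.val with hkey
  -- blocking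
  have hblock : ∀ k : Fin N, (e.state (T + t0)).pc k ≠ .remainder →
      ∃ j : Fin N, (e.state (T + t0)).pc j ≠ .remainder ∧
        (((e.state (T + t0)).token j).color = ((e.state (T + t0)).token k).color ∧ key j < key k
         ∨ (some (e.state (T + t0)).gcolor = ((e.state (T + t0)).token k).color ∧
            ((e.state (T + t0)).token j).color ≠ ((e.state (T + t0)).token k).color)) := by
    intro k hknr
    obtain ⟨s, c, m, j, hj, htok, hp⟩ := hwait k hknr
    rcases hp with hp | hp
    · obtain ⟨hc, h0, hs, hle, heq⟩ := bw_stuck_same (hloop k hknr) hp hj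
      refine ⟨⟨j, hj⟩, hnr_of_sess _ h0, Or.inl ⟨by rw [htok, hc], ?_⟩⟩
      have hkk : j ≠ k.val := by
        intro he
        apply hs
        have : (⟨j, hj⟩ : Fin N) = k := Fin.ext he
        rw [this, htok]
      have hknum : ((e.state (T + t0)).token k).number = m := by rw [htok]
      simp only [hkey, hknum]
      exact bw_key_lt hj k.isLt (by omega)
    · obtain ⟨hg2, hcne, h0, hs⟩ := bw_stuck_diff (hloop k hknr) hp hj
      refine ⟨⟨j, hj⟩, hnr_of_sess _ h0, Or.inr ⟨by rw [htok, hg2], by rw [htok]; exact hcne⟩⟩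
  -- the two color classes
  set G := (e.state (T + t0)).gcolor with hG
  set P : Color → Finset (Fin N) := fun X => Finset.univ.filter
    (fun k => (e.state (T + t0)).pc k ≠ .remainder ∧
      ((e.state (T + t0)).token k).color = some X) with hP
  have hPopp : ∀ k, k ∉ P G.opp := by
    intro k hkP
    obtain ⟨k0, hk0P, hk0min⟩ := Finset.exists_min_image (P G.opp) key ⟨k, hkP⟩
    rw [hP, Finset.mem_filter] at hk0P
    obtain ⟨j, hjnr, hcase⟩ := hblock k0 hk0P.2.1
    rcases hcase with ⟨hcj, hklt⟩ | ⟨hgc, hcj⟩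
    · have hjP : j ∈ P G.opp := by
        rw [hP, Finset.mem_filter]
        exact ⟨Finset.mem_univ j, hjnr, by rw [hcj, hk0P.2.2]⟩
      exact absurd (hk0min j hjP) (not_le.mpr hklt)
    · rw [hk0P.2.2] at hgc
      exact bwColor_ne_opp G (Option.some_injective _ hgc)
  have hinr : (e.state (T + t0)).pc i ≠ .remainder := by
    intro hr
    have h2 := htry (T + t0) (le_trans hTn (Nat.le_add_right _ _))
    unfold bwInEntry at h2
    rw [hr] at h2
    exact h2
  obtain ⟨si, ci, mi, ji, hji, htoki, hpi⟩ := hwait i hinr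
  have hiG : ((e.state (T + t0)).token i).color = some G := by
    rcases eq_or_ne ci G with rfl | hne2
    · rw [htoki]
    · exfalso
      apply hPopp i
      rw [hP, Finset.mem_filter]
      refine ⟨Finset.mem_univ i, hinr, ?_⟩
      rw [htoki]
      rw [bwColor_eq_opp hne2]
  have hiP : i ∈ P G := by
    rw [hP, Finset.mem_filter]
    exact ⟨Finset.mem_univ i, hinr, hiG⟩
  obtain ⟨k0, hk0P, hk0min⟩ := Finset.exists_min_image (P G) key ⟨i, hiP⟩
  rw [hP, Finset.mem_filter] at hk0P
  obtain ⟨j, hjnr, hcase⟩ := hblock k0 hk0P.2.1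
  rcases hcase with ⟨hcj, hklt⟩ | ⟨hgc, hcj⟩
  · have hjP : j ∈ P G := by
      rw [hP, Finset.mem_filter]
      exact ⟨Finset.mem_univ j, hjnr, by rw [hcj, hk0P.2.2]⟩
    exact absurd (hk0min j hjP) (not_le.mpr hklt)
  · obtain ⟨sj, cj, mj, jj, hjj, htokj, hpj⟩ := hwait j hjnr
    rw [hk0P.2.2] at hcj
    apply hPopp j
    rw [hP, Finset.mem_filter]
    refine ⟨Finset.mem_univ j, hjnr, ?_⟩
    rw [htokj] at hcj ⊢
    have h6 : cj ≠ G := fun he => hcj (by rw [← he])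
    rw [bwColor_eq_opp h6]
end

section
/- The BWBGME algorithm satisfies the Starvation Freedom property: in every execution in which no process stays in the critical section forever, every process that enters the entry section eventually enters the critical section. -/
namespace BW
open BWPc Function
variable {N : ℕ} {st st' : BWState N} {k : Fin N}


lemma step_rem (h : bwStep st k st') (hpc : st.pc k = .remainder) :
    st' = st ∨ ∃ s : ℕ, 0 < s ∧ st' = { st with pc := Function.update st.pc k (.d1 s) } := by
  unfold bwStep at h; rw [hpc] at h; exact h

lemma step_d1 {s} (h : bwStep st k st') (hpc : st.pc k = .d1 s) :
    st' = { st with token := Function.update st.token k ⟨s, none, 0⟩,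
                    pc := Function.update st.pc k (.d2 s) } := by
  unfold bwStep at h; rw [hpc] at h; exact h

lemma step_d2 {s} (h : bwStep st k st') (hpc : st.pc k = .d2 s) :
    st' = { st with choosing := Function.update st.choosing k true,
                    pc := Function.update st.pc k (.d3 s) } := by
  unfold bwStep at h; rw [hpc] at h; exact h

lemma step_d3 {s} (h : bwStep st k st') (hpc : st.pc k = .d3 s) :
    st' = { st with pc := Function.update st.pc k (.scan s st.gcolor 0 0) } := by
  unfold bwStep at h; rw [hpc] at h; exact h

lemma step_scan {s c j m} (h : bwStep st k st') (hpc : st.pc k = .scan s c j m) :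
    if hj : j < N then
      st' = { st with pc := Function.update st.pc k (.scan s c (j+1)
                (if (st.token ⟨j, hj⟩).color = some c ∧ (st.token ⟨j, hj⟩).session ≠ 0 ∧
                    (st.token ⟨j, hj⟩).session ≠ s
                 then max m (st.token ⟨j, hj⟩).number else m)) }
    else
      st' = { st with pc := Function.update st.pc k (.d4 s c (m+1)) } := by
  unfold bwStep at h; rw [hpc] at h; exact h

lemma step_d4 {s c m} (h : bwStep st k st') (hpc : st.pc k = .d4 s c m) :
    st' = { st with token := Function.update st.token k ⟨s, some c, m⟩,
                    pc := Function.update st.pc k (.d5 s c m) } := by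
  unfold bwStep at h; rw [hpc] at h; exact h

lemma step_d5 {s c m} (h : bwStep st k st') (hpc : st.pc k = .d5 s c m) :
    st' = { st with choosing := Function.update st.choosing k false,
                    pc := Function.update st.pc k (.w1 s c m 0) } := by
  unfold bwStep at h; rw [hpc] at h; exact h

lemma step_w1 {s c m j} (h : bwStep st k st') (hpc : st.pc k = .w1 s c m j) :
    if hj : j < N then
      if st.choosing ⟨j, hj⟩ = false ∨ (st.token ⟨j, hj⟩).session = s then
        st' = { st with pc := Function.update st.pc k (.wB s c m j) }
      else st' = st
    else
      st' = { st with pc := Function.update st.pc k (.cs s c m) } := by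
  unfold bwStep at h; rw [hpc] at h; exact h

lemma step_wB {s c m j} (h : bwStep st k st') (hpc : st.pc k = .wB s c m j) :
    if hj : j < N then
      if (st.token ⟨j, hj⟩).color = some c then
        st' = { st with pc := Function.update st.pc k (.wSame s c m j) }
      else
        st' = { st with pc := Function.update st.pc k (.wDiff s c m j) }
    else st' = st := by
  unfold bwStep at h; rw [hpc] at h; exact h

lemma step_wSame {s c m j} (h : bwStep st k st') (hpc : st.pc k = .wSame s c m j) :
    if hj : j < N then
      if (m < (st.token ⟨j, hj⟩).number ∨ (m = (st.token ⟨j, hj⟩).number ∧ k.val < j)) ∨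
          (st.token ⟨j, hj⟩).color ≠ some c ∨ (st.token ⟨j, hj⟩).session = 0 ∨
          (st.token ⟨j, hj⟩).session = s then
        st' = { st with pc := Function.update st.pc k (.w1 s c m (j+1)) }
      else st' = st
    else st' = st := by
  unfold bwStep at h; rw [hpc] at h; exact h

lemma step_wDiff {s c m j} (h : bwStep st k st') (hpc : st.pc k = .wDiff s c m j) :
    if hj : j < N then
      if st.gcolor ≠ c ∨ (st.token ⟨j, hj⟩).color = some c ∨
          (st.token ⟨j, hj⟩).session = 0 ∨ (st.token ⟨j, hj⟩).session = s then
        st' = { st with pc := Function.update st.pc k (.w1 s c m (j+1)) }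
      else st' = st
    else st' = st := by
  unfold bwStep at h; rw [hpc] at h; exact h

lemma step_cs {s c m} (h : bwStep st k st') (hpc : st.pc k = .cs s c m) :
    st' = st ∨
      st' = { st with pc :=
                Function.update st.pc k (if m = 1 then BWPc.x2 else BWPc.x1 s c m 0) } := by
  unfold bwStep at h; rw [hpc] at h; exact h

lemma step_x1 {s c m j} (h : bwStep st k st') (hpc : st.pc k = .x1 s c m j) :
    if hj : j < N then
      if (st.token ⟨j, hj⟩).session ≠ 0 ∧ (st.token ⟨j, hj⟩).color = some c.opp then
        st' = { st with pc := Function.update st.pc k .x2 }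
      else
        st' = { st with pc := Function.update st.pc k (.x1 s c m (j+1)) }
    else
      st' = { st with pc := Function.update st.pc k (.xFlip s c m) } := by
  unfold bwStep at h; rw [hpc] at h; exact h

lemma step_xFlip {s c m} (h : bwStep st k st') (hpc : st.pc k = .xFlip s c m) :
    st' = { st with gcolor := c.opp, pc := Function.update st.pc k .x2 } := by
  unfold bwStep at h; rw [hpc] at h; exact h

lemma step_x2 (h : bwStep st k st') (hpc : st.pc k = .x2) :
    st' = { st with token := Function.update st.token k BWTok.init,
                    pc := Function.update st.pc k .remainder } := by
  unfold bwStep at h; rw [hpc] at h; exact h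

/-- Any step leaves the components of other processes unchanged. -/
lemma step_frame (h : bwStep st k st') (i : Fin N) (hik : i ≠ k) :
    st'.pc i = st.pc i ∧ st'.token i = st.token i ∧ st'.choosing i = st.choosing i := by
  rcases hpc : st.pc k with _ | s | s | s | ⟨s,c,j,m⟩ | ⟨s,c,m⟩ | ⟨s,c,m⟩ | ⟨s,c,m,j⟩ |
    ⟨s,c,m,j⟩ | ⟨s,c,m,j⟩ | ⟨s,c,m,j⟩ | ⟨s,c,m⟩ | ⟨s,c,m,j⟩ | ⟨s,c,m⟩ | _
  · rcases step_rem h hpc with h' | ⟨s, -, h'⟩ <;> subst h' <;>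
      simp [Function.update_of_ne hik]
  · rw [step_d1 h hpc]; simp [Function.update_of_ne hik]
  · rw [step_d2 h hpc]; simp [Function.update_of_ne hik]
  · rw [step_d3 h hpc]; simp [Function.update_of_ne hik]
  · have h' := step_scan h hpc
    split at h' <;> rw [h'] <;> simp [Function.update_of_ne hik]
  · rw [step_d4 h hpc]; simp [Function.update_of_ne hik]
  · rw [step_d5 h hpc]; simp [Function.update_of_ne hik]
  · have h' := step_w1 h hpc
    split at h' <;> [skip; (rw [h']; simp [Function.update_of_ne hik])]
    split at h' <;> rw [h'] <;> simp [Function.update_of_ne hik]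
  · have h' := step_wB h hpc
    split at h' <;> [skip; (rw [h']; exact ⟨rfl, rfl, rfl⟩)]
    split at h' <;> rw [h'] <;> simp [Function.update_of_ne hik]
  · have h' := step_wSame h hpc
    split at h' <;> [skip; (rw [h']; exact ⟨rfl, rfl, rfl⟩)]
    split at h' <;> rw [h'] <;> simp [Function.update_of_ne hik]
  · have h' := step_wDiff h hpc
    split at h' <;> [skip; (rw [h']; exact ⟨rfl, rfl, rfl⟩)]
    split at h' <;> rw [h'] <;> simp [Function.update_of_ne hik]
  · rcases step_cs h hpc with h' | h' <;> rw [h'] <;> simp [Function.update_of_ne hik]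
  · have h' := step_x1 h hpc
    split at h' <;> [skip; (rw [h']; simp [Function.update_of_ne hik])]
    split at h' <;> rw [h'] <;> simp [Function.update_of_ne hik]
  · rw [step_xFlip h hpc]; simp [Function.update_of_ne hik]
  · rw [step_x2 h hpc]; simp [Function.update_of_ne hik]

/-- Steps that are not at an `xFlip` location leave GlobalColor unchanged. -/
lemma step_gcolor (h : bwStep st k st')
    (hx : ∀ s c m, st.pc k ≠ .xFlip s c m) : st'.gcolor = st.gcolor := by
  rcases hpc : st.pc k with _ | s | s | s | ⟨s,c,j,m⟩ | ⟨s,c,m⟩ | ⟨s,c,m⟩ | ⟨s,c,m,j⟩ |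
    ⟨s,c,m,j⟩ | ⟨s,c,m,j⟩ | ⟨s,c,m,j⟩ | ⟨s,c,m⟩ | ⟨s,c,m,j⟩ | ⟨s,c,m⟩ | _
  · rcases step_rem h hpc with h' | ⟨s, -, h'⟩ <;> subst h' <;> rfl
  · rw [step_d1 h hpc]
  · rw [step_d2 h hpc]
  · rw [step_d3 h hpc]
  · have h' := step_scan h hpc; split at h' <;> rw [h']
  · rw [step_d4 h hpc]
  · rw [step_d5 h hpc]
  · have h' := step_w1 h hpc
    split at h' <;> [skip; (rw [h'])]
    split at h' <;> rw [h']
  · have h' := step_wB h hpc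
    split at h' <;> [skip; (rw [h'])]
    split at h' <;> rw [h']
  · have h' := step_wSame h hpc
    split at h' <;> [skip; (rw [h'])]
    split at h' <;> rw [h']
  · have h' := step_wDiff h hpc
    split at h' <;> [skip; (rw [h'])]
    split at h' <;> rw [h']
  · rcases step_cs h hpc with h' | h' <;> rw [h']
  · have h' := step_x1 h hpc
    split at h' <;> [skip; (rw [h'])]
    split at h' <;> rw [h']
  · exact absurd hpc (hx _ _ _)
  · rw [step_x2 h hpc]

/-- If GlobalColor changes, the step is an `xFlip` write. -/
lemma step_gcolor_change (h : bwStep st k st') (hne : st'.gcolor ≠ st.gcolor) :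
    ∃ s c m, st.pc k = .xFlip s c m ∧ st'.gcolor = c.opp := by
  by_cases hx : ∃ s c m, st.pc k = BWPc.xFlip s c m
  · obtain ⟨s, c, m, hpc⟩ := hx
    exact ⟨s, c, m, hpc, by rw [step_xFlip h hpc]⟩
  · push_neg at hx
    exact absurd (step_gcolor h hx) hne



/-- Structural invariant relating the pc of a process to its token and choosing bit. -/
def pcInv (N : ℕ) : BWPc → BWTok → Bool → Prop := fun pc tok ch =>
  match pc with
  | .remainder => tok = BWTok.init ∧ ch = false
  | .d1 s => tok = BWTok.init ∧ ch = false ∧ 0 < s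
  | .d2 s => tok = ⟨s, none, 0⟩ ∧ ch = false ∧ 0 < s
  | .d3 s => tok = ⟨s, none, 0⟩ ∧ ch = true ∧ 0 < s
  | .scan s _ j _ => tok = ⟨s, none, 0⟩ ∧ ch = true ∧ 0 < s ∧ j ≤ N
  | .d4 s _ _ => tok = ⟨s, none, 0⟩ ∧ ch = true ∧ 0 < s
  | .d5 s c m => tok = ⟨s, some c, m⟩ ∧ ch = true ∧ 0 < s
  | .w1 s c m j => tok = ⟨s, some c, m⟩ ∧ ch = false ∧ 0 < s ∧ j ≤ N
  | .wB s c m j => tok = ⟨s, some c, m⟩ ∧ ch = false ∧ 0 < s ∧ j < N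
  | .wSame s c m j => tok = ⟨s, some c, m⟩ ∧ ch = false ∧ 0 < s ∧ j < N
  | .wDiff s c m j => tok = ⟨s, some c, m⟩ ∧ ch = false ∧ 0 < s ∧ j < N
  | .cs s c m => tok = ⟨s, some c, m⟩ ∧ ch = false ∧ 0 < s
  | .x1 s c m _ => tok = ⟨s, some c, m⟩ ∧ ch = false ∧ 0 < s
  | .xFlip s c m => tok = ⟨s, some c, m⟩ ∧ ch = false ∧ 0 < s
  | .x2 => (∃ s c m, tok = ⟨s, some c, m⟩ ∧ 0 < s) ∧ ch = false

def Inv (st : BWState N) : Prop :=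
  ∀ i, pcInv N (st.pc i) (st.token i) (st.choosing i)

lemma Inv_init (N : ℕ) (c0 : Color) : Inv (bwInit N c0) := by
  intro i; simp [bwInit, pcInv]

lemma Inv_step (hI : Inv st) (h : bwStep st k st') : Inv st' := by
  intro i
  by_cases hik : i = k
  · subst hik
    have hIi := hI i
    rcases hpc : st.pc i with _ | s | s | s | ⟨s,c,j,m⟩ | ⟨s,c,m⟩ | ⟨s,c,m⟩ | ⟨s,c,m,j⟩ |
      ⟨s,c,m,j⟩ | ⟨s,c,m,j⟩ | ⟨s,c,m,j⟩ | ⟨s,c,m⟩ | ⟨s,c,m,j⟩ | ⟨s,c,m⟩ | _ <;>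
      rw [hpc] at hIi <;> simp only [pcInv] at hIi
    · rcases step_rem h hpc with h' | ⟨s, hs, h'⟩
      · subst h'; rw [hpc]; simp only [pcInv]; exact hIi
      · subst h'; simp [pcInv, hIi.1, hIi.2, hs]
    · rw [step_d1 h hpc]; simp [pcInv, hIi.2]
    · rw [step_d2 h hpc]; simp [pcInv, hIi.1, hIi.2.2]
    · rw [step_d3 h hpc]; simp [pcInv, hIi.1, hIi.2.1, hIi.2.2]
    · have h' := step_scan h hpc
      split at h' <;> rw [h'] <;>
        simp [pcInv, hIi.1, hIi.2.1, hIi.2.2.1] <;> omega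
    · rw [step_d4 h hpc]; simp [pcInv, hIi.2.1, hIi.2.2]
    · rw [step_d5 h hpc]; simp [pcInv, hIi.1, hIi.2.2]
    · have h' := step_w1 h hpc
      split at h'
      · split at h'
        · rw [h']; simp [pcInv, hIi.1, hIi.2.1, hIi.2.2.1]; omega
        · rw [h', hpc]; simp only [pcInv]; exact hIi
      · rw [h']; simp [pcInv, hIi.1, hIi.2.1, hIi.2.2.1]
    · have h' := step_wB h hpc
      split at h'
      · split at h' <;> rw [h'] <;> simp [pcInv, hIi.1, hIi.2.1, hIi.2.2.1, hIi.2.2.2]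
      · rw [h', hpc]; simp only [pcInv]; exact hIi
    · have h' := step_wSame h hpc
      split at h'
      · split at h'
        · rw [h']; simp [pcInv, hIi.1, hIi.2.1, hIi.2.2.1]; omega
        · rw [h', hpc]; simp only [pcInv]; exact hIi
      · rw [h', hpc]; simp only [pcInv]; exact hIi
    · have h' := step_wDiff h hpc
      split at h'
      · split at h'
        · rw [h']; simp [pcInv, hIi.1, hIi.2.1, hIi.2.2.1]; omega
        · rw [h', hpc]; simp only [pcInv]; exact hIi
      · rw [h', hpc]; simp only [pcInv]; exact hIi
    · rcases step_cs h hpc with h' | h'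
      · rw [h', hpc]; simp only [pcInv]; exact hIi
      · rw [h']
        split <;> simp [pcInv, hIi.1, hIi.2.1, hIi.2.2] <;>
          exact ⟨s, c, m, hIi.1, hIi.2.2⟩
    · have h' := step_x1 h hpc
      split at h'
      · split at h' <;> rw [h'] <;>
          simp [pcInv, hIi.1, hIi.2.1, hIi.2.2] <;>
          exact ⟨s, c, m, hIi.1, hIi.2.2⟩
      · rw [h']; simp [pcInv, hIi.1, hIi.2.1, hIi.2.2]
    · rw [step_xFlip h hpc]
      simp only [pcInv, Function.update_self]
      exact ⟨⟨s, c, m, hIi.1, hIi.2.2⟩, hIi.2.1⟩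
    · rw [step_x2 h hpc]; simp [pcInv, BWTok.init, hIi.2]
  · obtain ⟨h1, h2, h3⟩ := step_frame h i hik
    rw [h1, h2, h3]; exact hI i

/-- The invariant holds at every point of an execution. -/
lemma Inv_exec (e : BWExec N) (n : ℕ) : Inv (e.state n) := by
  induction n with
  | zero => obtain ⟨c0, h0⟩ := e.init; rw [h0]; exact Inv_init N c0
  | succ n ih => exact Inv_step ih (e.step n)

/-- An own step that does not change the pc does not change the state at all. -/
lemma own_step_stutter (h : bwStep st k st') (hpc : st'.pc k = st.pc k) : st' = st := by
  rcases hL : st.pc k with _ | s | s | s | ⟨s,c,j,m⟩ | ⟨s,c,m⟩ | ⟨s,c,m⟩ | ⟨s,c,m,j⟩ |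
    ⟨s,c,m,j⟩ | ⟨s,c,m,j⟩ | ⟨s,c,m,j⟩ | ⟨s,c,m⟩ | ⟨s,c,m,j⟩ | ⟨s,c,m⟩ | _
  · rcases step_rem h hL with h' | ⟨s, -, h'⟩
    · exact h'
    · rw [h', hL] at hpc; simp at hpc
  · rw [step_d1 h hL] at hpc ⊢; rw [hL] at hpc; simp at hpc
  · rw [step_d2 h hL] at hpc ⊢; rw [hL] at hpc; simp at hpc
  · rw [step_d3 h hL] at hpc ⊢; rw [hL] at hpc; simp at hpc
  · have h' := step_scan h hL
    split at h' <;> rw [h'] at hpc ⊢ <;> rw [hL] at hpc <;> simp at hpc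
  · rw [step_d4 h hL] at hpc ⊢; rw [hL] at hpc; simp at hpc
  · rw [step_d5 h hL] at hpc ⊢; rw [hL] at hpc; simp at hpc
  · have h' := step_w1 h hL
    split at h'
    · split at h'
      · rw [h'] at hpc ⊢; rw [hL] at hpc; simp at hpc
      · exact h'
    · rw [h'] at hpc ⊢; rw [hL] at hpc; simp at hpc
  · have h' := step_wB h hL
    split at h'
    · split at h' <;> (rw [h'] at hpc ⊢; rw [hL] at hpc; simp at hpc)
    · exact h'
  · have h' := step_wSame h hL
    split at h'
    · split at h'
      · rw [h'] at hpc ⊢; rw [hL] at hpc; simp at hpc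
      · exact h'
    · exact h'
  · have h' := step_wDiff h hL
    split at h'
    · split at h'
      · rw [h'] at hpc ⊢; rw [hL] at hpc; simp at hpc
      · exact h'
    · exact h'
  · rcases step_cs h hL with h' | h'
    · exact h'
    · rw [h'] at hpc ⊢; rw [hL] at hpc
      split at hpc <;> simp at hpc
  · have h' := step_x1 h hL
    split at h'
    · split at h' <;> (rw [h'] at hpc ⊢; rw [hL] at hpc; simp at hpc)
    · rw [h'] at hpc ⊢; rw [hL] at hpc; simp at hpc
  · rw [step_xFlip h hL] at hpc ⊢; rw [hL] at hpc; simp at hpc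
  · rw [step_x2 h hL] at hpc ⊢; rw [hL] at hpc; simp at hpc

/-- The program-order measure. -/
def mu (N : ℕ) : BWPc → ℕ
  | .remainder => 0
  | .x2 => 1
  | .xFlip _ _ _ => 2
  | .x1 _ _ _ j => 3 + (N - j)
  | .cs _ _ _ => N + 4
  | .wSame _ _ _ j => N + 5 + 3*(N - j)
  | .wDiff _ _ _ j => N + 5 + 3*(N - j)
  | .wB _ _ _ j => N + 6 + 3*(N - j)
  | .w1 _ _ _ j => N + 7 + 3*(N - j)
  | .d5 _ _ _ => 4*N + 8
  | .d4 _ _ _ => 4*N + 9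
  | .scan _ _ j _ => 4*N + 10 + (N - j)
  | .d3 _ => 5*N + 11
  | .d2 _ => 5*N + 12
  | .d1 _ => 5*N + 13

lemma mu_pos (L : BWPc) (h : L ≠ .remainder) : 0 < mu N L := by
  cases L <;> simp [mu] at h ⊢

/-- An own step away from the remainder either stutters or decreases the measure. -/
lemma step_mu (h : bwStep st k st') (hrem : st.pc k ≠ .remainder) :
    st' = st ∨ mu N (st'.pc k) < mu N (st.pc k) := by
  rcases hL : st.pc k with _ | s | s | s | ⟨s,c,j,m⟩ | ⟨s,c,m⟩ | ⟨s,c,m⟩ | ⟨s,c,m,j⟩ |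
    ⟨s,c,m,j⟩ | ⟨s,c,m,j⟩ | ⟨s,c,m,j⟩ | ⟨s,c,m⟩ | ⟨s,c,m,j⟩ | ⟨s,c,m⟩ | _
  · exact absurd hL hrem
  · rw [step_d1 h hL]; right; simp [mu, hL]
  · rw [step_d2 h hL]; right; simp [mu, hL]
  · rw [step_d3 h hL]; right; simp [mu, hL]; omega
  · have h' := step_scan h hL
    split at h' <;> rw [h'] <;> right <;> simp [mu, hL] <;> omega
  · rw [step_d4 h hL]; right; simp [mu, hL]
  · rw [step_d5 h hL]; right; simp [mu, hL]; omega
  · have h' := step_w1 h hL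
    split at h'
    · split at h'
      · rw [h']; right; simp [mu, hL]
      · exact Or.inl h'
    · rw [h']; right; simp [mu, hL]; omega
  · have h' := step_wB h hL
    split at h'
    · split at h' <;> (rw [h']; right; simp [mu, hL])
    · exact Or.inl h'
  · have h' := step_wSame h hL
    split at h'
    · split at h'
      · rw [h']; right; simp [mu, hL]; omega
      · exact Or.inl h'
    · exact Or.inl h'
  · have h' := step_wDiff h hL
    split at h'
    · split at h'
      · rw [h']; right; simp [mu, hL]; omega
      · exact Or.inl h'
    · exact Or.inl h'
  · rcases step_cs h hL with h' | h'
    · exact Or.inl h'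
    · rw [h']; right
      by_cases hm : m = 1 <;> simp [mu, hL, hm] <;> omega
  · have h' := step_x1 h hL
    split at h'
    · split at h' <;> (rw [h']; right; simp [mu, hL]; omega)
    · rw [h']; right; simp [mu, hL]; omega
  · rw [step_xFlip h hL]; right; simp [mu, hL]
  · rw [step_x2 h hL]; right; simp [mu, hL]

variable {e : BWExec N}

/-- Frame over time. -/
lemma frame_t {j : Fin N} {t : ℕ} (h : e.sched t ≠ j) :
    (e.state (t+1)).pc j = (e.state t).pc j ∧
    (e.state (t+1)).token j = (e.state t).token j ∧
    (e.state (t+1)).choosing j = (e.state t).choosing j :=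
  step_frame (e.step t) j (fun hj => h hj.symm) |>.imp id id |>.imp id id

/-- A process whose pc never again returns to the remainder section eventually
has a constant pc. -/
lemma stabilizes (j : Fin N) (a : ℕ)
    (h : ∀ t, a ≤ t → (e.state t).pc j ≠ .remainder) :
    ∃ T, a ≤ T ∧ ∀ t, T ≤ t → (e.state t).pc j = (e.state T).pc j := by
  have main : ∀ M a, mu N ((e.state a).pc j) ≤ M →
      (∀ t, a ≤ t → (e.state t).pc j ≠ .remainder) →
      ∃ T, a ≤ T ∧ ∀ t, T ≤ t → (e.state t).pc j = (e.state T).pc j := by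
    intro M
    induction M with
    | zero =>
      intro a hmu ha
      exact absurd (Nat.lt_of_lt_of_le (mu_pos _ (ha a le_rfl)) hmu) (by simp)
    | succ M ih =>
      intro a hmu ha
      by_cases hc : ∀ t, a ≤ t → (e.state t).pc j = (e.state a).pc j
      · exact ⟨a, le_rfl, hc⟩
      · push_neg at hc
        obtain ⟨t0, ht0a, ht0⟩ := hc
        classical
        have hex : ∃ u, a ≤ u ∧ (e.state u).pc j = (e.state a).pc j ∧
            (e.state (u+1)).pc j ≠ (e.state u).pc j := by
          by_contra hno
          push_neg at hno
          have : ∀ d, (e.state (a + d)).pc j = (e.state a).pc j := by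
            intro d
            induction d with
            | zero => rfl
            | succ d ihd =>
              have h1 := hno (a + d) (Nat.le_add_right a d) ihd
              have h2 : a + (d+1) = (a + d) + 1 := rfl
              rw [h2, h1, ihd]
          obtain ⟨d, hd⟩ : ∃ d, t0 = a + d := ⟨t0 - a, by omega⟩
          exact ht0 (by rw [hd, this d])
        obtain ⟨u, hau, hupc, hune⟩ := hex
        have hsched : e.sched u = j := by
          by_contra hs
          exact hune (frame_t hs).1
        have hdec : mu N ((e.state (u+1)).pc j) < mu N ((e.state u).pc j) := by
          rcases step_mu (hsched ▸ e.step u) (ha u hau) with h' | h'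
          · exact absurd (by rw [h']) hune
          · exact h'
        have := ih (u+1) (by rw [hupc] at hdec; omega) (fun t ht => ha t (by omega))
        obtain ⟨T, hT1, hT2⟩ := this
        exact ⟨T, by omega, hT2⟩
  exact main (mu N ((e.state a).pc j)) a le_rfl h

/-- A process is stuck if its pc is eventually constant. -/
def Stuck (e : BWExec N) (j : Fin N) : Prop :=
  ∃ T, ∀ t, T ≤ t → (e.state t).pc j = (e.state T).pc j

lemma remainder_io_of_not_stuck {j : Fin N} (h : ¬ Stuck e j) :
    ∀ a, ∃ t, a ≤ t ∧ (e.state t).pc j = .remainder := by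
  intro a
  by_contra hno
  push_neg at hno
  obtain ⟨T, -, hT⟩ := stabilizes (e := e) j a hno
  exact h ⟨T, hT⟩

/-- If the pc of a process is eventually constant, so are its token and choosing. -/
lemma const_components {j : Fin N} {T : ℕ}
    (hc : ∀ t, T ≤ t → (e.state t).pc j = (e.state T).pc j) :
    ∀ t, T ≤ t → (e.state t).token j = (e.state T).token j ∧
      (e.state t).choosing j = (e.state T).choosing j := by
  have key : ∀ d, (e.state (T + d)).token j = (e.state T).token j ∧
      (e.state (T + d)).choosing j = (e.state T).choosing j := by
    intro d
    induction d with
    | zero => exact ⟨rfl, rfl⟩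
    | succ d ihd =>
      have hTd : T ≤ T + d := Nat.le_add_right T d
      by_cases hs : e.sched (T + d) = j
      · have hst := own_step_stutter (hs ▸ e.step (T + d))
          (by rw [hc (T + d + 1) (by omega), hc (T + d) hTd])
        rw [show T + (d+1) = T + d + 1 by omega, hst]
        exact ihd
      · have := frame_t (e := e) (j := j) (t := T + d) hs
        rw [show T + (d+1) = T + d + 1 by omega, this.2.1, this.2.2]
        exact ihd
  intro t ht
  obtain ⟨d, rfl⟩ : ∃ d, t = T + d := ⟨t - T, by omega⟩
  exact key d

/-- A non-remainder process with constant pc is scheduled (with the same pc before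
and after) at arbitrarily large times. -/
lemma sched_const {j : Fin N} {T : ℕ}
    (hc : ∀ t, T ≤ t → (e.state t).pc j = (e.state T).pc j)
    (hne : (e.state T).pc j ≠ .remainder) :
    ∀ u, ∃ v, u ≤ v ∧ T ≤ v ∧ e.sched v = j ∧
      (e.state v).pc j = (e.state T).pc j ∧
      (e.state (v+1)).pc j = (e.state T).pc j := by
  intro u
  obtain ⟨v, hv, hvj⟩ := e.fair j (max u T)
    (by rw [hc (max u T) (le_max_right u T)]; exact hne)
  exact ⟨v, le_trans (le_max_left u T) hv, le_trans (le_max_right u T) hv, hvj,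
    hc v (le_trans (le_max_right u T) hv), hc (v+1) (by omega)⟩
lemma color_opp_opp (c : Color) : c.opp.opp = c := by cases c <;> rfl
lemma color_opp_ne (c : Color) : c.opp ≠ c := by cases c <;> simp [Color.opp]
lemma color_eq_opp_of_ne {c d : Color} (h : c ≠ d) : c = d.opp := by
  cases c <;> cases d <;> simp_all [Color.opp]

/-- Characterization of stuttering own steps: the process is in the remainder,
the CS, or blocked at a busy-wait whose condition is false. -/
lemma stutter_cases (h : bwStep st k st') (hI : Inv st) (hpc' : st'.pc k = st.pc k) :
    (st.pc k = .remainder) ∨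
    (∃ s c m, st.pc k = .cs s c m) ∨
    (∃ s c m j, ∃ hj : j < N, st.pc k = .w1 s c m j ∧
       ¬(st.choosing ⟨j,hj⟩ = false ∨ (st.token ⟨j,hj⟩).session = s)) ∨
    (∃ s c m j, ∃ hj : j < N, st.pc k = .wSame s c m j ∧
       ¬((m < (st.token ⟨j,hj⟩).number ∨ (m = (st.token ⟨j,hj⟩).number ∧ k.val < j)) ∨
         (st.token ⟨j,hj⟩).color ≠ some c ∨ (st.token ⟨j,hj⟩).session = 0 ∨
         (st.token ⟨j,hj⟩).session = s)) ∨
    (∃ s c m j, ∃ hj : j < N, st.pc k = .wDiff s c m j ∧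
       ¬(st.gcolor ≠ c ∨ (st.token ⟨j,hj⟩).color = some c ∨
         (st.token ⟨j,hj⟩).session = 0 ∨ (st.token ⟨j,hj⟩).session = s)) := by
  have hIk := hI k
  rcases hL : st.pc k with _ | s | s | s | ⟨s,c,j,m⟩ | ⟨s,c,m⟩ | ⟨s,c,m⟩ | ⟨s,c,m,j⟩ |
    ⟨s,c,m,j⟩ | ⟨s,c,m,j⟩ | ⟨s,c,m,j⟩ | ⟨s,c,m⟩ | ⟨s,c,m,j⟩ | ⟨s,c,m⟩ | _ <;>
    rw [hL] at hIk <;> simp only [pcInv] at hIk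
  · exact Or.inl rfl
  · rw [step_d1 h hL, hL] at hpc'; simp at hpc'
  · rw [step_d2 h hL, hL] at hpc'; simp at hpc'
  · rw [step_d3 h hL, hL] at hpc'; simp at hpc'
  · have h' := step_scan h hL
    split at h' <;> (rw [h', hL] at hpc'; simp at hpc')
  · rw [step_d4 h hL, hL] at hpc'; simp at hpc'
  · rw [step_d5 h hL, hL] at hpc'; simp at hpc'
  · have h' := step_w1 h hL
    split at h'
    · rename_i hj
      split at h'
      · rw [h', hL] at hpc'; simp at hpc'
      · rename_i hcond
        exact Or.inr (Or.inr (Or.inl ⟨s, c, m, j, hj, rfl, hcond⟩))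
    · rw [h', hL] at hpc'; simp at hpc'
  · have h' := step_wB h hL
    split at h'
    · split at h' <;> (rw [h', hL] at hpc'; simp at hpc')
    · exact absurd hIk.2.2.2 (by assumption)
  · have h' := step_wSame h hL
    split at h'
    · rename_i hj
      split at h'
      · rw [h', hL] at hpc'; simp at hpc'
      · rename_i hcond
        exact Or.inr (Or.inr (Or.inr (Or.inl ⟨s, c, m, j, hj, rfl, hcond⟩)))
    · exact absurd hIk.2.2.2 (by assumption)
  · have h' := step_wDiff h hL
    split at h'
    · rename_i hj
      split at h'
      · rw [h', hL] at hpc'; simp at hpc'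
      · rename_i hcond
        exact Or.inr (Or.inr (Or.inr (Or.inr ⟨s, c, m, j, hj, rfl, hcond⟩)))
    · exact absurd hIk.2.2.2 (by assumption)
  · exact Or.inr (Or.inl ⟨s, c, m, rfl⟩)
  · have h' := step_x1 h hL
    split at h'
    · split at h' <;> (rw [h', hL] at hpc'; simp at hpc')
    · rw [h', hL] at hpc'; simp at hpc'
  · rw [step_xFlip h hL, hL] at hpc'; simp at hpc'
  · rw [step_x2 h hL, hL] at hpc'; simp at hpc'

variable {e : BWExec N}

/-- Eventually GlobalColor is constant, given a process whose token is
eventually constant with a (some) color. -/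
lemma gcolor_stable (x0 : Fin N) (T0 sI : ℕ) (cI : Color) (mI : ℕ)
    (htok : ∀ t, T0 ≤ t → (e.state t).token x0 = ⟨sI, some cI, mI⟩) (hs : sI ≠ 0) :
    ∃ T1, T0 ≤ T1 ∧ ∀ t, T1 ≤ t → (e.state t).gcolor = (e.state T1).gcolor := by
  classical
  -- a flip to `cI` at time `u`
  set ChgC : ℕ → Prop := fun u => (e.state (u+1)).gcolor = cI ∧ (e.state u).gcolor ≠ cI
    with hChgC
  -- at a flip to `cI`, the scheduled process is at `xFlip _ cI.opp _`
  have flip_pc : ∀ u, ChgC u → ∃ s m, (e.state u).pc (e.sched u) = .xFlip s cI.opp m := by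
    intro u hu
    obtain ⟨s, c, m, hpc, hcol⟩ := step_gcolor_change (e.step u) (by
      rw [hu.1]; exact fun hh => hu.2 hh.symm)
    have : c = cI.opp := by
      have : c.opp = cI := by rw [← hcol, hu.1]
      rw [← this, color_opp_opp]
    exact ⟨s, m, by rw [hpc, this]⟩
  -- after a flip to cI by k, process k never again reaches `xFlip _ cI.opp _`
  have once : ∀ k u, T0 ≤ u → e.sched u = k → ChgC u →
      ∀ t, u + 1 ≤ t → ∀ s m j, ((e.state t).pc k = .x1 s cI.opp m j → j ≤ x0.val) ∧
        (e.state t).pc k ≠ .xFlip s cI.opp m := by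
    intro k u hu0 hsk hu
    obtain ⟨s0, m0, hpc0⟩ := flip_pc u hu
    rw [hsk] at hpc0
    have hstep0 := e.step u
    rw [hsk] at hstep0
    have hbase : (e.state (u+1)).pc k = .x2 := by
      rw [step_xFlip hstep0 hpc0]; simp
    -- invariant by induction
    have main : ∀ d, ∀ s m j,
        (((e.state (u+1+d)).pc k = .x1 s cI.opp m j → j ≤ x0.val) ∧
         (e.state (u+1+d)).pc k ≠ .xFlip s cI.opp m) := by
      intro d
      induction d with
      | zero => intro s m j; rw [hbase]; exact ⟨by simp, by simp⟩
      | succ d ihd =>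
        intro s m j
        have hstep := e.step (u+1+d)
        by_cases hsk2 : e.sched (u+1+d) = k
        · rw [hsk2] at hstep
          have heq : u+1+(d+1) = (u+1+d)+1 := rfl
          rw [heq]
          rcases hL : (e.state (u+1+d)).pc k with _ | s' | s' | s' | ⟨s',c',j',m'⟩ |
            ⟨s',c',m'⟩ | ⟨s',c',m'⟩ | ⟨s',c',m',j'⟩ | ⟨s',c',m',j'⟩ | ⟨s',c',m',j'⟩ |
            ⟨s',c',m',j'⟩ | ⟨s',c',m'⟩ | ⟨s',c',m',j'⟩ | ⟨s',c',m'⟩ | _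
          · rcases step_rem hstep hL with h' | ⟨s'', -, h'⟩
            · rw [h', hL]; simp
            · rw [h']; simp
          · rw [step_d1 hstep hL]; simp
          · rw [step_d2 hstep hL]; simp
          · rw [step_d3 hstep hL]; simp
          · have h' := step_scan hstep hL
            split at h' <;> rw [h'] <;> simp
          · rw [step_d4 hstep hL]; simp
          · rw [step_d5 hstep hL]; simp
          · have h' := step_w1 hstep hL
            split at h'
            · split at h'
              · rw [h']; simp
              · rw [h', hL]; simp
            · rw [h']; simp
          · have h' := step_wB hstep hL
            split at h'
            · split at h' <;> (rw [h']; simp)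
            · rw [h', hL]; simp
          · have h' := step_wSame hstep hL
            split at h'
            · split at h'
              · rw [h']; simp
              · rw [h', hL]; simp
            · rw [h', hL]; simp
          · have h' := step_wDiff hstep hL
            split at h'
            · split at h'
              · rw [h']; simp
              · rw [h', hL]; simp
            · rw [h', hL]; simp
          · rcases step_cs hstep hL with h' | h'
            · rw [h', hL]; simp
            · rw [h']; simp
              constructor
              · split <;> simp
                intro h1 h2 h3; omega
              · split <;> simp
          · -- x1 case
            have h' := step_x1 hstep hL
            by_cases hc' : c' = cI.opp
            · subst hc'
              have hj' : j' ≤ x0.val := (ihd s' m' j').1 hL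
              have hj'N : j' < N := lt_of_le_of_lt hj' x0.isLt
              rw [dif_pos hj'N] at h'
              split at h'
              · rw [h']; simp
              · rename_i hcond
                -- the read of x0's token must have succeeded if j' = x0
                by_cases hjx : j' = x0.val
                · exfalso
                  apply hcond
                  have hfin : (⟨j', hj'N⟩ : Fin N) = x0 := Fin.ext hjx
                  rw [hfin, htok (u+1+d) (by omega)]
                  simp [hs, color_opp_opp]
                · rw [h']; simp
                  intro _ _ h3; omega
            · have hc'' : cI.opp ≠ c' := fun hh => hc' hh.symm
              split at h'
              · split at h' <;> (rw [h']; simp [hc', hc''])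
              · rw [h']; simp [hc', hc'']
          · -- xFlip case: impossible with color cI.opp, fine otherwise
            rw [step_xFlip hstep hL]; simp
          · rw [step_x2 hstep hL]; simp
        · have hfr := (step_frame hstep k (fun hh => hsk2 hh.symm)).1
          have heq : u+1+(d+1) = (u+1+d)+1 := rfl
          rw [heq, hfr]
          exact ihd s m j
    intro t ht s m j
    obtain ⟨d, rfl⟩ : ∃ d, t = u + 1 + d := ⟨t - (u+1), by omega⟩
    exact main d s m j
  -- hence each process flips to cI at most once after T0
  have unique_flip : ∀ k, ∀ u u', T0 ≤ u → T0 ≤ u' → u < u' →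
      e.sched u = k → e.sched u' = k → ChgC u → ¬ ChgC u' := by
    intro k u u' hu hu' huu hsk hsk' hC hC'
    obtain ⟨s, m, hpc⟩ := flip_pc u' hC'
    rw [hsk'] at hpc
    exact (once k u hu hsk hC u' (by omega) s m 0).2 hpc
  -- pick for each process its first flip time (if any)
  have hTex : ∀ k : Fin N, ∃ Mk : ℕ, ∀ u, T0 ≤ u → e.sched u = k → ChgC u → u < Mk := by
    intro k
    by_cases hk : ∃ u, T0 ≤ u ∧ e.sched u = k ∧ ChgC u
    · have hleast := Nat.find_spec hk
      refine ⟨Nat.find hk + 1, ?_⟩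
      intro u hu hsk hC
      by_contra hge
      push_neg at hge
      have h1 : Nat.find hk ≤ u := Nat.find_le ⟨hu, hsk, hC⟩
      have hlt : Nat.find hk < u := by omega
      exact unique_flip k (Nat.find hk) u hleast.1 hu hlt hleast.2.1 hsk hleast.2.2 hC
    · push_neg at hk
      exact ⟨0, fun u hu hsk hC => absurd hC (hk u hu hsk)⟩
  choose Mk hMk using hTex
  set M : ℕ := max T0 (Finset.univ.sup Mk) with hM
  have noChg : ∀ u, M ≤ u → ¬ ChgC u := by
    intro u hu hC
    have := hMk (e.sched u) u (le_trans (le_max_left _ _) hu) rfl hC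
    have hsup : Mk (e.sched u) ≤ Finset.univ.sup Mk :=
      Finset.le_sup (Finset.mem_univ _)
    omega
  -- after M, gcolor can only change from cI to cI.opp
  have mono : ∀ t, M ≤ t → (e.state t).gcolor = cI.opp → (e.state (t+1)).gcolor = cI.opp := by
    intro t ht hcol
    by_cases hch : (e.state (t+1)).gcolor = (e.state t).gcolor
    · rw [hch, hcol]
    · by_cases h2 : (e.state (t+1)).gcolor = cI
      · exact absurd ⟨h2, by rw [hcol]; exact color_opp_ne cI⟩ (noChg t ht)
      · exact color_eq_opp_of_ne h2
  by_cases hop : ∃ t, M ≤ t ∧ (e.state t).gcolor = cI.opp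
  · obtain ⟨t1, ht1, hc1⟩ := hop
    refine ⟨max T0 t1, le_max_left _ _, ?_⟩
    have hconst : ∀ t, t1 ≤ t → (e.state t).gcolor = cI.opp := by
      intro t ht
      obtain ⟨d, rfl⟩ : ∃ d, t = t1 + d := ⟨t - t1, by omega⟩
      clear ht
      induction d with
      | zero => exact hc1
      | succ d ihd => exact mono (t1 + d) (by omega) ihd
    intro t ht
    rw [hconst t (le_trans (le_max_right _ _) ht), hconst (max T0 t1) (le_max_right _ _)]
  · push_neg at hop
    refine ⟨max T0 M, le_max_left _ _, ?_⟩
    have hcc : ∀ t, M ≤ t → (e.state t).gcolor = cI := by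
      intro t ht
      by_contra hne
      exact (hop t ht) (color_eq_opp_of_ne hne)
    intro t ht
    rw [hcc t (le_trans (le_max_right _ _) ht), hcc (max T0 M) (le_max_right _ _)]
/-- pc component of the INV2 invariant. -/
def pcP2 (g cP : Color) (sP mP pv : ℕ) : BWPc → Prop
  | .scan s' c' j u => c' = g ∧ (c' = cP → s' ≠ sP → pv < j → mP ≤ u)
  | .d4 s' c' u => c' = g ∧ (c' = cP → s' ≠ sP → mP + 1 ≤ u)
  | .d5 s' c' u => c' = g ∧ (c' = cP → s' ≠ sP → mP + 1 ≤ u)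
  | .cs s' c' u => c' = g ∧ (c' = cP → s' ≠ sP → mP + 1 ≤ u)
  | .xFlip s' c' u => c' = g ∧ (c' = cP → s' ≠ sP → mP + 1 ≤ u)
  | .w1 s' c' u _ => c' = g ∧ (c' = cP → s' ≠ sP → mP + 1 ≤ u)
  | .wB s' c' u _ => c' = g ∧ (c' = cP → s' ≠ sP → mP + 1 ≤ u)
  | .wSame s' c' u _ => c' = g ∧ (c' = cP → s' ≠ sP → mP + 1 ≤ u)
  | .wDiff s' c' u _ => c' = g ∧ (c' = cP → s' ≠ sP → mP + 1 ≤ u)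
  | .x1 s' c' u _ => c' = g ∧ (c' = cP → s' ≠ sP → mP + 1 ≤ u)
  | _ => True

/-- token component of the INV2 invariant. -/
def tokP2 (g cP : Color) (sP mP : ℕ) (tok : BWTok) : Prop :=
  ∀ s' c' u, tok = ⟨s', some c', u⟩ → c' = g ∧ (c' = cP → s' ≠ sP → mP + 1 ≤ u)

lemma INV2 {p q : Fin N} {g cP : Color} {sP mP r : ℕ}
    (hg : ∀ t, r ≤ t → (e.state t).gcolor = g)
    (hp : ∀ t, r ≤ t → (e.state t).token p = ⟨sP, some cP, mP⟩)
    (hsP : sP ≠ 0)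
    (hr : (e.state r).pc q = .remainder) :
    ∀ t, r ≤ t → pcP2 g cP sP mP p.val ((e.state t).pc q) ∧
      tokP2 g cP sP mP ((e.state t).token q) := by
  have base : pcP2 g cP sP mP p.val ((e.state r).pc q) ∧
      tokP2 g cP sP mP ((e.state r).token q) := by
    have hIq := (Inv_exec e r) q
    rw [hr] at hIq ⊢
    simp only [pcInv] at hIq
    refine ⟨by simp [pcP2], ?_⟩
    intro s' c' u htok
    rw [hIq.1] at htok
    simp [BWTok.init] at htok
  have main : ∀ d, pcP2 g cP sP mP p.val ((e.state (r+d)).pc q) ∧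
      tokP2 g cP sP mP ((e.state (r+d)).token q) := by
    intro d
    induction d with
    | zero => exact base
    | succ d ihd =>
      have hrd : r ≤ r + d := Nat.le_add_right r d
      have heq : r + (d+1) = (r+d) + 1 := rfl
      rw [heq]
      set t := r + d with ht
      have hstep := e.step t
      by_cases hsk : e.sched t = q
      · rw [hsk] at hstep
        obtain ⟨ih1, ih2⟩ := ihd
        rcases hL : (e.state t).pc q with _ | s' | s' | s' | ⟨s',c',j,u⟩ | ⟨s',c',u⟩ |
          ⟨s',c',u⟩ | ⟨s',c',u,j⟩ | ⟨s',c',u,j⟩ | ⟨s',c',u,j⟩ | ⟨s',c',u,j⟩ | ⟨s',c',u⟩ |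
          ⟨s',c',u,j⟩ | ⟨s',c',u⟩ | _ <;> rw [hL] at ih1 <;> simp only [pcP2] at ih1
        · rcases step_rem hstep hL with h' | ⟨s'', -, h'⟩
          · rw [h', hL]; simp only [pcP2]; exact ⟨trivial, ih2⟩
          · rw [h']; simp only [Function.update_self, pcP2]; exact ⟨trivial, ih2⟩
        · rw [step_d1 hstep hL]
          simp only [Function.update_self, pcP2]
          refine ⟨trivial, ?_⟩
          intro s'' c'' u htok
          simp at htok
        · rw [step_d2 hstep hL]
          simp only [Function.update_self, pcP2]
          exact ⟨trivial, ih2⟩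
        · rw [step_d3 hstep hL]
          simp only [Function.update_self, pcP2]
          refine ⟨⟨(hg t hrd).symm ▸ rfl, by omega⟩, ih2⟩
        · have h' := step_scan hstep hL
          split at h'
          · rename_i hj
            rw [h']
            simp only [Function.update_self, pcP2]
            refine ⟨⟨ih1.1, ?_⟩, ih2⟩
            intro hc hsne hlt
            by_cases hjp : j = p.val
            · have hfin : (⟨j, hj⟩ : Fin N) = p := Fin.ext hjp
              rw [if_pos (by
                rw [hfin, hp t hrd]
                exact ⟨by rw [hc], hsP, fun hh => hsne hh.symm⟩)]
              rw [hfin, hp t hrd]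
              exact le_max_right _ _
            · have hplt : p.val < j := by omega
              have hle := ih1.2 hc hsne hplt
              split
              · exact le_trans hle (le_max_left _ _)
              · exact hle
          · rename_i hj
            rw [h']
            simp only [Function.update_self, pcP2]
            refine ⟨⟨ih1.1, ?_⟩, ih2⟩
            intro hc hsne
            have : mP ≤ u := ih1.2 hc hsne (lt_of_lt_of_le p.isLt (by omega))
            omega
        · rw [step_d4 hstep hL]
          simp only [Function.update_self, pcP2]
          refine ⟨ih1, ?_⟩
          intro s'' c'' u'' htok
          injection htok with h1 h2 h3
          injection h2 with h2
          subst h1; subst h2; subst h3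
          exact ih1
        · rw [step_d5 hstep hL]
          simp only [Function.update_self, pcP2]
          exact ⟨ih1, ih2⟩
        · have h' := step_w1 hstep hL
          split at h'
          · split at h'
            · rw [h']; simp only [Function.update_self, pcP2]; exact ⟨ih1, ih2⟩
            · rw [h', hL]; simp only [pcP2]; exact ⟨ih1, ih2⟩
          · rw [h']; simp only [Function.update_self, pcP2]; exact ⟨ih1, ih2⟩
        · have h' := step_wB hstep hL
          split at h'
          · split at h' <;>
              (rw [h']; simp only [Function.update_self, pcP2]; exact ⟨ih1, ih2⟩)
          · rw [h', hL]; simp only [pcP2]; exact ⟨ih1, ih2⟩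
        · have h' := step_wSame hstep hL
          split at h'
          · split at h'
            · rw [h']; simp only [Function.update_self, pcP2]; exact ⟨ih1, ih2⟩
            · rw [h', hL]; simp only [pcP2]; exact ⟨ih1, ih2⟩
          · rw [h', hL]; simp only [pcP2]; exact ⟨ih1, ih2⟩
        · have h' := step_wDiff hstep hL
          split at h'
          · split at h'
            · rw [h']; simp only [Function.update_self, pcP2]; exact ⟨ih1, ih2⟩
            · rw [h', hL]; simp only [pcP2]; exact ⟨ih1, ih2⟩
          · rw [h', hL]; simp only [pcP2]; exact ⟨ih1, ih2⟩
        · rcases step_cs hstep hL with h' | h'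
          · rw [h', hL]; simp only [pcP2]; exact ⟨ih1, ih2⟩
          · rw [h']; simp only [Function.update_self]
            split <;> simp only [pcP2] <;> exact ⟨by first | trivial | exact ih1, ih2⟩
        · have h' := step_x1 hstep hL
          split at h'
          · split at h' <;>
              (rw [h']; simp only [Function.update_self, pcP2];
               exact ⟨by first | trivial | exact ih1, ih2⟩)
          · rw [h']; simp only [Function.update_self, pcP2]; exact ⟨ih1, ih2⟩
        · rw [step_xFlip hstep hL]
          simp only [Function.update_self, pcP2]
          exact ⟨trivial, ih2⟩
        · rw [step_x2 hstep hL]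
          simp only [Function.update_self, pcP2]
          refine ⟨trivial, ?_⟩
          intro s'' c'' u htok
          simp [BWTok.init] at htok
      · have hfr := step_frame hstep q (fun hh => hsk hh.symm)
        rw [hfr.1, hfr.2.1]
        exact ihd
  intro t ht
  obtain ⟨d, rfl⟩ : ∃ d, t = r + d := ⟨t - r, by omega⟩
  exact main d

/-- The waiting-room trap. -/
def B3 (sQ pv : ℕ) (cP : Color) : BWPc → Prop
  | .d2 s' => s' = sQ
  | .d3 s' => s' = sQ
  | .scan s' _ _ _ => s' = sQ
  | .d4 s' _ _ => s' = sQ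
  | .d5 s' _ _ => s' = sQ
  | .w1 s' _ _ j => s' = sQ ∧ j ≤ pv
  | .wB s' _ _ j => s' = sQ ∧ j ≤ pv
  | .wSame s' c' _ j => s' = sQ ∧ j ≤ pv ∧ (j = pv → c' = cP)
  | .wDiff s' c' _ j => s' = sQ ∧ j ≤ pv ∧ (j = pv → c' ≠ cP)
  | _ => False

lemma INV3 {p q : Fin N} {g cP : Color} {sP mP sQ v' : ℕ}
    (hg : ∀ t, v' ≤ t → (e.state t).gcolor = g)
    (hp : ∀ t, v' ≤ t → (e.state t).token p = ⟨sP, some cP, mP⟩)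
    (hch : ∀ t, v' ≤ t → (e.state t).choosing p = false)
    (hsP : sP ≠ 0) (hsQP : sQ ≠ sP)
    (hP2 : ∀ t, v' ≤ t → pcP2 g cP sP mP p.val ((e.state t).pc q))
    (hstart : B3 sQ p.val cP ((e.state v').pc q)) :
    ∀ t, v' ≤ t → B3 sQ p.val cP ((e.state t).pc q) := by
  have main : ∀ d, B3 sQ p.val cP ((e.state (v'+d)).pc q) := by
    intro d
    induction d with
    | zero => exact hstart
    | succ d ihd =>
      have hrd : v' ≤ v' + d := Nat.le_add_right v' d
      have heq : v' + (d+1) = (v'+d) + 1 := rfl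
      rw [heq]
      set t := v' + d with ht
      have hstep := e.step t
      by_cases hsk : e.sched t = q
      · rw [hsk] at hstep
        rcases hL : (e.state t).pc q with _ | s' | s' | s' | ⟨s',c',j,u⟩ | ⟨s',c',u⟩ |
          ⟨s',c',u⟩ | ⟨s',c',u,j⟩ | ⟨s',c',u,j⟩ | ⟨s',c',u,j⟩ | ⟨s',c',u,j⟩ | ⟨s',c',u⟩ |
          ⟨s',c',u,j⟩ | ⟨s',c',u⟩ | _ <;> rw [hL] at ihd <;> simp only [B3] at ihd
        · rw [step_d2 hstep hL]; simp only [Function.update_self, B3]; exact ihd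
        · rw [step_d3 hstep hL]; simp only [Function.update_self, B3]; exact ihd
        · have h' := step_scan hstep hL
          split at h' <;> (rw [h']; simp only [Function.update_self, B3]; exact ihd)
        · rw [step_d4 hstep hL]; simp only [Function.update_self, B3]; exact ihd
        · rw [step_d5 hstep hL]; simp only [Function.update_self, B3]
          exact ⟨ihd, Nat.zero_le _⟩
        · have h' := step_w1 hstep hL
          split at h'
          · split at h'
            · rw [h']; simp only [Function.update_self, B3]; exact ihd
            · rw [h', hL]; simp only [B3]; exact ihd
          · rename_i hj
            exact absurd (lt_of_le_of_lt ihd.2 p.isLt) hj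
        · -- wB
          have hj : j < N := lt_of_le_of_lt ihd.2 p.isLt
          have h' := step_wB hstep hL
          rw [dif_pos hj] at h'
          split at h'
          · rename_i hcol
            rw [h']; simp only [Function.update_self, B3]
            refine ⟨ihd.1, ihd.2, ?_⟩
            intro hjp
            have hfin : (⟨j, hj⟩ : Fin N) = p := Fin.ext hjp
            rw [hfin, hp t hrd] at hcol
            injection hcol with hcol
            exact hcol.symm
          · rename_i hcol
            rw [h']; simp only [Function.update_self, B3]
            refine ⟨ihd.1, ihd.2, ?_⟩
            intro hjp hccp
            apply hcol
            have hfin : (⟨j, hj⟩ : Fin N) = p := Fin.ext hjp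
            rw [hfin, hp t hrd, hccp]
        · -- wSame
          have hj : j < N := lt_of_le_of_lt ihd.2.1 p.isLt
          have h' := step_wSame hstep hL
          rw [dif_pos hj] at h'
          split at h'
          · rename_i hcond
            rcases Nat.lt_or_ge j p.val with hjlt | hjge
            · rw [h']; simp only [Function.update_self, B3]
              exact ⟨ihd.1, by omega⟩
            · exfalso
              have hjp : j = p.val := by omega
              have hfin : (⟨j, hj⟩ : Fin N) = p := Fin.ext hjp
              have hcP : c' = cP := ihd.2.2 hjp
              have hnum : mP + 1 ≤ u := by
                have h2 := hP2 t hrd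
                rw [hL] at h2
                simp only [pcP2] at h2
                exact h2.2 hcP (by rw [ihd.1]; exact hsQP)
              rw [hfin, hp t hrd] at hcond
              simp only at hcond
              rcases hcond with (h1 | h1) | h1 | h1 | h1
              · omega
              · omega
              · exact h1 (by rw [hcP])
              · exact hsP h1
              · exact hsQP (by rw [← ihd.1, h1])
          · rw [h', hL]; simp only [B3]; exact ihd
        · -- wDiff
          have hj : j < N := lt_of_le_of_lt ihd.2.1 p.isLt
          have h' := step_wDiff hstep hL
          rw [dif_pos hj] at h'
          split at h'
          · rename_i hcond
            rcases Nat.lt_or_ge j p.val with hjlt | hjge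
            · rw [h']; simp only [Function.update_self, B3]
              exact ⟨ihd.1, by omega⟩
            · exfalso
              have hjp : j = p.val := by omega
              have hfin : (⟨j, hj⟩ : Fin N) = p := Fin.ext hjp
              have hcP : c' ≠ cP := ihd.2.2 hjp
              have hcg : c' = g := by
                have h2 := hP2 t hrd
                rw [hL] at h2
                simp only [pcP2] at h2
                exact h2.1
              rw [hfin, hp t hrd] at hcond
              simp only at hcond
              rcases hcond with h1 | h1 | h1 | h1
              · exact h1 (by rw [hg t hrd, hcg])
              · injection h1 with h1; exact hcP h1.symm
              · exact hsP h1
              · exact hsQP (by rw [← ihd.1, h1])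
          · rw [h', hL]; simp only [B3]; exact ihd
      · rw [(step_frame hstep q (fun hh => hsk hh.symm)).1]
        exact ihd
  intro t ht
  obtain ⟨d, rfl⟩ : ∃ d, t = v' + d := ⟨t - v', by omega⟩
  exact main d
lemma B3_ne_rem {sQ pv : ℕ} {cP : Color} {L : BWPc} (h : B3 sQ pv cP L) :
    L ≠ .remainder := by
  intro hL; subst hL; simpa [B3] using h

lemma tok_none_B3 {st : BWState N} {q : Fin N} {sq pv : ℕ} {cP : Color}
    (hI : Inv st) (hq : st.token q = ⟨sq, none, 0⟩) (hsq : sq ≠ 0) :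
    B3 sq pv cP (st.pc q) := by
  have hIq := hI q
  rcases hL : st.pc q with _ | s' | s' | s' | ⟨s',c',j,u⟩ | ⟨s',c',u⟩ |
    ⟨s',c',u⟩ | ⟨s',c',u,j⟩ | ⟨s',c',u,j⟩ | ⟨s',c',u,j⟩ | ⟨s',c',u,j⟩ | ⟨s',c',u⟩ |
    ⟨s',c',u,j⟩ | ⟨s',c',u⟩ | _ <;> rw [hL] at hIq <;> simp only [pcInv] at hIq <;>
    rw [hq] at hIq <;> simp only [B3]
  · have h1 := congrArg BWTok.session hIq.1
    simp [BWTok.init] at h1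
    exact hsq h1
  · have h1 := congrArg BWTok.session hIq.1
    simp [BWTok.init] at h1
    exact hsq h1
  · exact (congrArg BWTok.session hIq.1).symm
  · exact (congrArg BWTok.session hIq.1).symm
  · exact (congrArg BWTok.session hIq.1).symm
  · exact (congrArg BWTok.session hIq.1).symm
  · exact absurd (congrArg BWTok.color hIq.1) (by simp)
  · exact absurd (congrArg BWTok.color hIq.1) (by simp)
  · exact absurd (congrArg BWTok.color hIq.1) (by simp)
  · exact absurd (congrArg BWTok.color hIq.1) (by simp)
  · exact absurd (congrArg BWTok.color hIq.1) (by simp)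
  · exact absurd (congrArg BWTok.color hIq.1) (by simp)
  · exact absurd (congrArg BWTok.color hIq.1) (by simp)
  · exact absurd (congrArg BWTok.color hIq.1) (by simp)
  · obtain ⟨s'', c'', m'', htok, -⟩ := hIq.1
    exact absurd (congrArg BWTok.color htok) (by simp)

/-- A process with choosing = true is in its doorway (d3/scan/d4/d5), hence
inside the trap set for its own session. -/
lemma choosing_true_B3 {st : BWState N} {q : Fin N}
    (hI : Inv st) (hch : st.choosing q = true) :
    ∃ sq, (st.token q).session = sq ∧ 0 < sq ∧
      ∀ pv (cP : Color), B3 sq pv cP (st.pc q) := by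
  have hIq := hI q
  rcases hL : st.pc q with _ | s' | s' | s' | ⟨s',c',j,u⟩ | ⟨s',c',u⟩ |
    ⟨s',c',u⟩ | ⟨s',c',u,j⟩ | ⟨s',c',u,j⟩ | ⟨s',c',u,j⟩ | ⟨s',c',u,j⟩ | ⟨s',c',u⟩ |
    ⟨s',c',u,j⟩ | ⟨s',c',u⟩ | _ <;> rw [hL] at hIq <;> simp only [pcInv] at hIq <;>
    first
    | (exfalso; rw [hIq.2.1] at hch; exact Bool.false_ne_true hch)
    | (exfalso; rw [hIq.2] at hch; exact Bool.false_ne_true hch)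
    | skip
  · exact ⟨s', by rw [hIq.1], hIq.2.2, fun pv cP => by simp [B3]⟩
  · exact ⟨s', by rw [hIq.1], hIq.2.2.1, fun pv cP => by simp [B3]⟩
  · exact ⟨s', by rw [hIq.1], hIq.2.2, fun pv cP => by simp [B3]⟩
  · exact ⟨s', by rw [hIq.1], hIq.2.2, fun pv cP => by simp [B3]⟩

section Pointer

variable {Ts : ℕ} {g : Color}

/-- A stuck process whose (constant) token has a nonzero session is parked at a
busy-wait. -/
lemma stuck_wait_shape
    (hncs : ∀ (i : Fin N) (n : ℕ), bwInCS (e.state n) i →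
      ∃ m, n ≤ m ∧ ¬ bwInCS (e.state m) i)
    (hStab : ∀ jj : Fin N, Stuck e jj → ∀ t, Ts ≤ t → (e.state t).pc jj = (e.state Ts).pc jj)
    {q : Fin N} (hq : Stuck e q)
    (hsess : ((e.state Ts).token q).session ≠ 0) :
    ∃ sq cq mq κq, ((e.state Ts).pc q = .w1 sq cq mq κq ∨
        (e.state Ts).pc q = .wSame sq cq mq κq ∨ (e.state Ts).pc q = .wDiff sq cq mq κq) ∧
      (e.state Ts).token q = ⟨sq, some cq, mq⟩ ∧ 0 < sq := by
  have hcq := hStab q hq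
  have hne : (e.state Ts).pc q ≠ .remainder := by
    intro hL
    have hIq := (Inv_exec e Ts) q
    rw [hL] at hIq; simp only [pcInv] at hIq
    rw [hIq.1] at hsess; exact hsess rfl
  obtain ⟨v, -, hvTs, hvq, hpcv, hpcv1⟩ := sched_const hcq hne 0
  have hstep := e.step v
  rw [hvq] at hstep
  rcases stutter_cases hstep (Inv_exec e v) (by rw [hpcv1, hpcv]) with
    h0 | ⟨s', c', m', h0⟩ | ⟨s', c', m', κ', hκ, h0, -⟩ | ⟨s', c', m', κ', hκ, h0, -⟩ |
    ⟨s', c', m', κ', hκ, h0, -⟩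
  · rw [hpcv] at h0; exact absurd h0 hne
  · exfalso
    rw [hpcv] at h0
    obtain ⟨t2, ht2, hncs2⟩ := hncs q v ⟨s', c', m', hpcv.trans h0⟩
    exact hncs2 ⟨s', c', m', (hcq t2 (le_trans hvTs ht2)).trans h0⟩
  all_goals (
    rw [hpcv] at h0
    have hIq := (Inv_exec e Ts) q
    rw [h0] at hIq
    simp only [pcInv] at hIq)
  · exact ⟨s', c', m', κ', Or.inl h0, hIq.1, hIq.2.2.1⟩
  · exact ⟨s', c', m', κ', Or.inr (Or.inl h0), hIq.1, hIq.2.2.1⟩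
  · exact ⟨s', c', m', κ', Or.inr (Or.inr h0), hIq.1, hIq.2.2.1⟩

/-- A stuck process cannot be parked at `w1`. -/
lemma w1_impossible
    (hncs : ∀ (i : Fin N) (n : ℕ), bwInCS (e.state n) i →
      ∃ m, n ≤ m ∧ ¬ bwInCS (e.state m) i)
    (hStab : ∀ jj : Fin N, Stuck e jj → ∀ t, Ts ≤ t → (e.state t).pc jj = (e.state Ts).pc jj)
    (hg : ∀ t, Ts ≤ t → (e.state t).gcolor = g)
    {j : Fin N} {s : ℕ} {c : Color} {m κ : ℕ}
    (hj : Stuck e j) (hjL : (e.state Ts).pc j = .w1 s c m κ) : False := by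
  classical
  have hcj := hStab j hj
  have hIj := (Inv_exec e Ts) j
  rw [hjL] at hIj; simp only [pcInv] at hIj
  have htokj : ∀ t, Ts ≤ t → (e.state t).token j = ⟨s, some c, m⟩ := by
    intro t ht
    rw [(const_components hcj t ht).1, hIj.1]
  have hchj : ∀ t, Ts ≤ t → (e.state t).choosing j = false := by
    intro t ht
    rw [(const_components hcj t ht).2, hIj.2.1]
  have hκN : κ < N := by
    rcases Nat.lt_or_ge κ N with h | h
    · exact h
    · exfalso
      obtain ⟨v, -, hvTs, hvj, hpcv, hpcv1⟩ := sched_const hcj (by rw [hjL]; simp) 0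
      have hstep := e.step v
      rw [hvj] at hstep
      have h' := step_w1 hstep (by rw [hpcv, hjL])
      rw [dif_neg (by omega)] at h'
      rw [h'] at hpcv1
      simp only [Function.update_self] at hpcv1
      rw [hjL] at hpcv1
      exact absurd hpcv1 (by simp)
  set q : Fin N := ⟨κ, hκN⟩ with hqdef
  -- condition is false at every scheduled time of j
  have blocked : ∀ u, ∃ v, u ≤ v ∧ Ts ≤ v ∧
      (e.state v).choosing q = true ∧ ((e.state v).token q).session ≠ s := by
    intro u
    obtain ⟨v, hvu, hvTs, hvj, hpcv, hpcv1⟩ := sched_const hcj (by rw [hjL]; simp) u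
    have hstep := e.step v
    rw [hvj] at hstep
    have h' := step_w1 hstep (by rw [hpcv, hjL])
    rw [dif_pos hκN] at h'
    split at h'
    · exfalso
      rw [h'] at hpcv1
      simp only [Function.update_self] at hpcv1
      rw [hjL] at hpcv1
      exact absurd hpcv1 (by simp)
    · rename_i hcond
      push_neg at hcond
      exact ⟨v, hvu, hvTs, by simpa using hcond.1, hcond.2⟩
  by_cases hq : Stuck e q
  · -- q would be forever choosing, impossible
    obtain ⟨v, -, hvTs, hchv, -⟩ := blocked 0
    have hcq := hStab q hq
    have hchq : (e.state Ts).choosing q = true := by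
      rw [← (const_components hcq v hvTs).2]; exact hchv
    obtain ⟨sq, htokq, hsq, hshape⟩ := choosing_true_B3 (Inv_exec e Ts) hchq
    have hB := hshape j.val c
    have hner : (e.state Ts).pc q ≠ .remainder := B3_ne_rem hB
    obtain ⟨v2, -, hv2Ts, hv2q, hpcv2, hpcv21⟩ := sched_const hcq hner 0
    have hstep2 := e.step v2
    rw [hv2q] at hstep2
    rcases stutter_cases hstep2 (Inv_exec e v2) (by rw [hpcv21, hpcv2]) with
      h0 | ⟨s', c', m', h0⟩ | ⟨s', c', m', κ', hκ', h0, -⟩ | ⟨s', c', m', κ', hκ', h0, -⟩ |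
      ⟨s', c', m', κ', hκ', h0, -⟩ <;> rw [hpcv2] at h0
    · exact hner h0
    · obtain ⟨t2, ht2, hncs2⟩ := hncs q v2 ⟨s', c', m', (hcq v2 hv2Ts).trans h0⟩
      exact hncs2 ⟨s', c', m', (hcq t2 (le_trans hv2Ts ht2)).trans h0⟩
    all_goals (
      have hIq2 := (Inv_exec e Ts) q
      rw [h0] at hIq2 hB
      simp only [pcInv] at hIq2
      rw [hIq2.2.1] at hchq
      exact Bool.false_ne_true hchq)
  · -- q keeps running: it gets trapped behind j
    obtain ⟨r, hrTs, hr⟩ := remainder_io_of_not_stuck hq (Ts+1)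
    obtain ⟨v, hvr, hvTs, hchv, hsessv⟩ := blocked (r+1)
    obtain ⟨sq, htokq, hsq, hshape⟩ := choosing_true_B3 (Inv_exec e v) hchv
    have hsqs : sq ≠ s := by
      rw [htokq] at hsessv; exact hsessv
    have hgr : ∀ t, r ≤ t → (e.state t).gcolor = g := fun t ht => hg t (by omega)
    have hpr : ∀ t, r ≤ t → (e.state t).token j = ⟨s, some c, m⟩ :=
      fun t ht => htokj t (by omega)
    have hP2 := INV2 (e := e) (p := j) (q := q) hgr hpr (by omega) hr
    have hB3 := INV3 (e := e) (p := j) (q := q)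
      (fun t ht => hg t (by omega)) (fun t ht => htokj t (by omega))
      (fun t ht => hchj t (by omega)) (by omega) hsqs
      (fun t ht => (hP2 t (by omega)).1)
      (hshape j.val c)
    obtain ⟨t2, ht2, hrem2⟩ := remainder_io_of_not_stuck hq v
    exact B3_ne_rem (hB3 t2 ht2) hrem2

/-- Pointer lemma for `wSame`: a stuck process parked at `wSame` points to a stuck
process of the same color with smaller ticket. -/
lemma wSame_pointer
    (hncs : ∀ (i : Fin N) (n : ℕ), bwInCS (e.state n) i →
      ∃ m, n ≤ m ∧ ¬ bwInCS (e.state m) i)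
    (hStab : ∀ jj : Fin N, Stuck e jj → ∀ t, Ts ≤ t → (e.state t).pc jj = (e.state Ts).pc jj)
    (hg : ∀ t, Ts ≤ t → (e.state t).gcolor = g)
    {j : Fin N} {s : ℕ} {c : Color} {m κ : ℕ}
    (hj : Stuck e j) (hjL : (e.state Ts).pc j = .wSame s c m κ) :
    ∃ q : Fin N, ∃ sq mq κq,
      Stuck e q ∧
      ((e.state Ts).pc q = .w1 sq c mq κq ∨ (e.state Ts).pc q = .wSame sq c mq κq ∨
        (e.state Ts).pc q = .wDiff sq c mq κq) ∧
      (mq < m ∨ (mq = m ∧ q.val < j.val)) := by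
  classical
  have hcj := hStab j hj
  have hIj := (Inv_exec e Ts) j
  rw [hjL] at hIj; simp only [pcInv] at hIj
  have hκN : κ < N := hIj.2.2.2
  have htokj : ∀ t, Ts ≤ t → (e.state t).token j = ⟨s, some c, m⟩ := by
    intro t ht
    rw [(const_components hcj t ht).1, hIj.1]
  set q : Fin N := ⟨κ, hκN⟩ with hqdef
  have blocked : ∀ u, ∃ v, u ≤ v ∧ Ts ≤ v ∧
      ¬(m < ((e.state v).token q).number ∨
          (m = ((e.state v).token q).number ∧ j.val < κ)) ∧
      ((e.state v).token q).color = some c ∧ ((e.state v).token q).session ≠ 0 ∧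
      ((e.state v).token q).session ≠ s := by
    intro u
    obtain ⟨v, hvu, hvTs, hvj, hpcv, hpcv1⟩ := sched_const hcj (by rw [hjL]; simp) u
    have hstep := e.step v
    rw [hvj] at hstep
    have h' := step_wSame hstep (by rw [hpcv, hjL])
    rw [dif_pos hκN] at h'
    split at h'
    · exfalso
      rw [h'] at hpcv1
      simp only [Function.update_self] at hpcv1
      rw [hjL] at hpcv1
      exact absurd hpcv1 (by simp)
    · rename_i hcond
      push_neg at hcond
      refine ⟨v, hvu, hvTs, ?_, ?_, hcond.2.2.1, hcond.2.2.2⟩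
      · push_neg
        exact hcond.1
      · exact hcond.2.1
  by_cases hq : Stuck e q
  · obtain ⟨v, -, hvTs, hnum, hcol, hs0, hss⟩ := blocked 0
    have hcq := hStab q hq
    have htq : (e.state v).token q = (e.state Ts).token q := (const_components hcq v hvTs).1
    obtain ⟨sq, cq, mq, κq, hshape, htokq, hsq⟩ := stuck_wait_shape hncs hStab hq
      (by rw [← htq]; exact hs0)
    rw [htq, htokq] at hnum hcol hss
    simp only at hnum hcol hss
    injection hcol with hcol
    have hqj : q ≠ j := by
      intro hqj
      rw [hqj] at htokq
      rw [(const_components hcj Ts le_rfl).1] at htokq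
      rw [hIj.1] at htokq
      injection htokq with h1 h2 h3
      exact hss h1.symm
    refine ⟨q, sq, mq, κq, hq, by rw [← hcol]; exact hshape, ?_⟩
    push_neg at hnum
    rcases Nat.lt_or_ge mq m with h1 | h1
    · exact Or.inl h1
    · have hmq : mq = m := by omega
      right
      refine ⟨hmq, ?_⟩
      have hne : κ ≠ j.val := fun hh => hqj (Fin.ext hh)
      have h3 := hnum.2 hmq.symm
      show κ < j.val
      omega
  · obtain ⟨r, hrTs, hr⟩ := remainder_io_of_not_stuck hq (Ts+1)
    obtain ⟨v, hvr, hvTs, hnum, hcol, hs0, hss⟩ := blocked (r+1)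
    exfalso
    have hgr : ∀ t, r ≤ t → (e.state t).gcolor = g := fun t ht => hg t (by omega)
    have hpr : ∀ t, r ≤ t → (e.state t).token j = ⟨s, some c, m⟩ :=
      fun t ht => htokj t (by omega)
    have hP2 := INV2 (e := e) (p := j) (q := q) hgr hpr (by
      intro h0; rw [h0] at hIj; exact absurd hIj.2.2.1 (by simp)) hr
    obtain ⟨htok2⟩ := True.intro
    have h2 := (hP2 v (by omega)).2
    obtain ⟨sq', cq', mq', htokv⟩ : ∃ sq' cq' mq',
        (e.state v).token q = ⟨sq', some cq', mq'⟩ := by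
      rcases htokcase : (e.state v).token q with ⟨sq', oc, mq'⟩
      rcases oc with _ | cq'
      · rw [htokcase] at hcol; simp at hcol
      · exact ⟨sq', cq', mq', rfl⟩
    have hfacts := h2 sq' cq' mq' htokv
    rw [htokv] at hcol hss hnum
    injection hcol with hcol
    have : m + 1 ≤ mq' := hfacts.2 (by rw [hcol]) (by simpa using hss)
    simp only at hnum
    push_neg at hnum
    omega

/-- Pointer lemma for `wDiff`: a stuck process parked at `wDiff` has the global
color and points to a stuck process of the opposite color. -/
lemma wDiff_pointer
    (hncs : ∀ (i : Fin N) (n : ℕ), bwInCS (e.state n) i →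
      ∃ m, n ≤ m ∧ ¬ bwInCS (e.state m) i)
    (hStab : ∀ jj : Fin N, Stuck e jj → ∀ t, Ts ≤ t → (e.state t).pc jj = (e.state Ts).pc jj)
    (hg : ∀ t, Ts ≤ t → (e.state t).gcolor = g)
    {j : Fin N} {s : ℕ} {c : Color} {m κ : ℕ}
    (hj : Stuck e j) (hjL : (e.state Ts).pc j = .wDiff s c m κ) :
    g = c ∧ ∃ q : Fin N, ∃ sq cq mq κq,
      Stuck e q ∧
      ((e.state Ts).pc q = .w1 sq cq mq κq ∨ (e.state Ts).pc q = .wSame sq cq mq κq ∨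
        (e.state Ts).pc q = .wDiff sq cq mq κq) ∧ cq ≠ c := by
  classical
  have hcj := hStab j hj
  have hIj := (Inv_exec e Ts) j
  rw [hjL] at hIj; simp only [pcInv] at hIj
  have hκN : κ < N := hIj.2.2.2
  have htokj : ∀ t, Ts ≤ t → (e.state t).token j = ⟨s, some c, m⟩ := by
    intro t ht
    rw [(const_components hcj t ht).1, hIj.1]
  have hchj : ∀ t, Ts ≤ t → (e.state t).choosing j = false := by
    intro t ht
    rw [(const_components hcj t ht).2, hIj.2.1]
  set q : Fin N := ⟨κ, hκN⟩ with hqdef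
  have blocked : ∀ u, ∃ v, u ≤ v ∧ Ts ≤ v ∧
      (e.state v).gcolor = c ∧ ((e.state v).token q).color ≠ some c ∧
      ((e.state v).token q).session ≠ 0 ∧ ((e.state v).token q).session ≠ s := by
    intro u
    obtain ⟨v, hvu, hvTs, hvj, hpcv, hpcv1⟩ := sched_const hcj (by rw [hjL]; simp) u
    have hstep := e.step v
    rw [hvj] at hstep
    have h' := step_wDiff hstep (by rw [hpcv, hjL])
    rw [dif_pos hκN] at h'
    split at h'
    · exfalso
      rw [h'] at hpcv1
      simp only [Function.update_self] at hpcv1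
      rw [hjL] at hpcv1
      exact absurd hpcv1 (by simp)
    · rename_i hcond
      push_neg at hcond
      exact ⟨v, hvu, hvTs, hcond.1, hcond.2.1, hcond.2.2.1, hcond.2.2.2⟩
  have hgc : g = c := by
    obtain ⟨v, -, hvTs, hgv, -⟩ := blocked 0
    rw [← hg v hvTs, hgv]
  refine ⟨hgc, ?_⟩
  by_cases hq : Stuck e q
  · obtain ⟨v, -, hvTs, -, hcol, hs0, hss⟩ := blocked 0
    have hcq := hStab q hq
    have htq : (e.state v).token q = (e.state Ts).token q := (const_components hcq v hvTs).1
    obtain ⟨sq, cq, mq, κq, hshape, htokq, hsq⟩ := stuck_wait_shape hncs hStab hq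
      (by rw [← htq]; exact hs0)
    rw [htq, htokq] at hcol
    simp only at hcol
    refine ⟨q, sq, cq, mq, κq, hq, hshape, ?_⟩
    intro hcq'
    exact hcol (by rw [hcq'])
  · exfalso
    obtain ⟨r, hrTs, hr⟩ := remainder_io_of_not_stuck hq (Ts+1)
    obtain ⟨v, hvr, hvTs, -, hcol, hs0, hss⟩ := blocked (r+1)
    have hs0' : s ≠ 0 := by
      intro h0; rw [h0] at hIj; exact absurd hIj.2.2.1 (by simp)
    have hgr : ∀ t, r ≤ t → (e.state t).gcolor = g := fun t ht => hg t (by omega)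
    have hpr : ∀ t, r ≤ t → (e.state t).token j = ⟨s, some c, m⟩ :=
      fun t ht => htokj t (by omega)
    have hP2 := INV2 (e := e) (p := j) (q := q) hgr hpr hs0' hr
    -- the token of q at time v must be colorless
    rcases htokcase : (e.state v).token q with ⟨sq', oc, mq'⟩
    rcases oc with _ | cq'
    · -- colorless: q is in a conflicting doorway, apply the trap
      have hzero : mq' = 0 ∧ sq' ≠ 0 ∧ sq' ≠ s := by
        rw [htokcase] at hs0 hss
        refine ⟨?_, hs0, hss⟩
        -- token with color none has number 0 by the invariant
        have hIq := (Inv_exec e v) q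
        rcases hLq : (e.state v).pc q with _ | s' | s' | s' | ⟨s',c',j',u⟩ | ⟨s',c',u⟩ |
          ⟨s',c',u⟩ | ⟨s',c',u,j'⟩ | ⟨s',c',u,j'⟩ | ⟨s',c',u,j'⟩ | ⟨s',c',u,j'⟩ | ⟨s',c',u⟩ |
          ⟨s',c',u,j'⟩ | ⟨s',c',u⟩ | _ <;> rw [hLq] at hIq <;> simp only [pcInv] at hIq <;>
          rw [htokcase] at hIq
        · exact (congrArg BWTok.number hIq.1)
        · exact (congrArg BWTok.number hIq.1)
        · exact (congrArg BWTok.number hIq.1)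
        · exact (congrArg BWTok.number hIq.1)
        · exact (congrArg BWTok.number hIq.1)
        · exact (congrArg BWTok.number hIq.1)
        · exact absurd (congrArg BWTok.color hIq.1) (by simp)
        · exact absurd (congrArg BWTok.color hIq.1) (by simp)
        · exact absurd (congrArg BWTok.color hIq.1) (by simp)
        · exact absurd (congrArg BWTok.color hIq.1) (by simp)
        · exact absurd (congrArg BWTok.color hIq.1) (by simp)
        · exact absurd (congrArg BWTok.color hIq.1) (by simp)
        · exact absurd (congrArg BWTok.color hIq.1) (by simp)
        · exact absurd (congrArg BWTok.color hIq.1) (by simp)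
        · obtain ⟨s'', c'', m'', htok', -⟩ := hIq.1
          exact absurd (congrArg BWTok.color htok') (by simp)
      obtain ⟨hm0, hsq0, hsqs⟩ := hzero
      subst hm0
      have hB3 := INV3 (e := e) (p := j) (q := q)
        (fun t ht => hg t (by omega)) (fun t ht => htokj t (by omega))
        (fun t ht => hchj t (by omega)) hs0' hsqs
        (fun t ht => (hP2 t (by omega)).1)
        (tok_none_B3 (Inv_exec e v) htokcase hsq0)
      obtain ⟨t2, ht2, hrem2⟩ := remainder_io_of_not_stuck hq v
      exact B3_ne_rem (hB3 t2 ht2) hrem2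
    · -- colored: INV2 forces the color to be g = c, contradiction
      have hfacts := (hP2 v (by omega)).2 sq' cq' mq' htokcase
      rw [htokcase] at hcol
      simp only at hcol
      exact hcol (by rw [hfacts.1, hgc])

end Pointer
lemma lex_enc {a b x y Nn : ℕ} (hx : x < Nn) (h : a < b ∨ (a = b ∧ x < y)) :
    a * Nn + x < b * Nn + y := by
  rcases h with h | ⟨rfl, h⟩
  · have h1 : a * Nn + x < (a+1) * Nn := by
      have : (a+1) * Nn = a * Nn + Nn := by ring
      omega
    have h2 : (a+1) * Nn ≤ b * Nn := Nat.mul_le_mul_right _ h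
    omega
  · omega

lemma no_min {P : Fin N → ℕ → ℕ → ℕ → Prop}
    (hdes : ∀ (q : Fin N) sq mq κq, P q sq mq κq →
      ∃ q' : Fin N, ∃ sq' mq' κq', P q' sq' mq' κq' ∧
        (mq' < mq ∨ (mq' = mq ∧ q'.val < q.val))) :
    ∀ (q : Fin N) sq mq κq, P q sq mq κq → False := by
  have main : ∀ t (q : Fin N) sq mq κq, mq * N + q.val ≤ t → P q sq mq κq → False := by
    intro t
    induction t with
    | zero =>
      intro q sq mq κq hle hP
      obtain ⟨q', sq', mq', κq', hP', hlt⟩ := hdes _ _ _ _ hP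
      have h2 := lex_enc (Nn := N) q'.isLt hlt
      omega
    | succ t ih =>
      intro q sq mq κq hle hP
      obtain ⟨q', sq', mq', κq', hP', hlt⟩ := hdes _ _ _ _ hP
      have h2 := lex_enc (Nn := N) q'.isLt hlt
      exact ih q' sq' mq' κq' (by omega) hP'
  intro q sq mq κq hP
  exact main (mq * N + q.val) q sq mq κq le_rfl hP

/-- Entry-section pcs. -/
def entryPc : BWPc → Prop
  | .remainder => False
  | .cs _ _ _ => False
  | .x1 _ _ _ _ => False
  | .xFlip _ _ _ => False
  | .x2 => False
  | _ => True

lemma entry_iff (st : BWState N) (i : Fin N) : bwInEntry st i ↔ entryPc (st.pc i) := by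
  unfold bwInEntry
  cases st.pc i <;> simp [entryPc]

/-- From the entry section, a step stays in the entry section or enters the CS. -/
lemma entry_step (h : bwStep st k st') (hE : entryPc (st.pc k)) :
    entryPc (st'.pc k) ∨ ∃ s c m, st'.pc k = .cs s c m := by
  rcases hL : st.pc k with _ | s | s | s | ⟨s,c,j,m⟩ | ⟨s,c,m⟩ | ⟨s,c,m⟩ | ⟨s,c,m,j⟩ |
    ⟨s,c,m,j⟩ | ⟨s,c,m,j⟩ | ⟨s,c,m,j⟩ | ⟨s,c,m⟩ | ⟨s,c,m,j⟩ | ⟨s,c,m⟩ | _ <;>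
    rw [hL] at hE <;> simp only [entryPc] at hE
  · rw [step_d1 h hL]; left; simp [entryPc]
  · rw [step_d2 h hL]; left; simp [entryPc]
  · rw [step_d3 h hL]; left; simp [entryPc]
  · have h' := step_scan h hL
    split at h' <;> (rw [h']; left; simp [entryPc])
  · rw [step_d4 h hL]; left; simp [entryPc]
  · rw [step_d5 h hL]; left; simp [entryPc]
  · have h' := step_w1 h hL
    split at h'
    · split at h'
      · rw [h']; left; simp [entryPc]
      · rw [h', hL]; left; simp [entryPc]
    · rw [h']; right; exact ⟨s, c, m, by simp⟩
  · have h' := step_wB h hL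
    split at h'
    · split at h' <;> (rw [h']; left; simp [entryPc])
    · rw [h', hL]; left; simp [entryPc]
  · have h' := step_wSame h hL
    split at h'
    · split at h'
      · rw [h']; left; simp [entryPc]
      · rw [h', hL]; left; simp [entryPc]
    · rw [h', hL]; left; simp [entryPc]
  · have h' := step_wDiff h hL
    split at h'
    · split at h'
      · rw [h']; left; simp [entryPc]
      · rw [h', hL]; left; simp [entryPc]
    · rw [h', hL]; left; simp [entryPc]
end BW

theorem bw_starvation_freedom' {N : ℕ} (e : BWExec N)
    (hncs : ∀ (i : Fin N) (n : ℕ), bwInCS (e.state n) i →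
      ∃ m, n ≤ m ∧ ¬ bwInCS (e.state m) i)
    (i : Fin N) (n : ℕ) (h : bwInEntry (e.state n) i) :
    ∃ m, n ≤ m ∧ bwInCS (e.state m) i := by
  classical
  by_contra hcon
  push_neg at hcon
  -- i stays in the entry section forever
  have hE : ∀ t, n ≤ t → BW.entryPc ((e.state t).pc i) := by
    intro t ht
    obtain ⟨d, rfl⟩ : ∃ d, t = n + d := ⟨t - n, by omega⟩
    clear ht
    induction d with
    | zero => exact (BW.entry_iff _ i).1 h
    | succ d ihd =>
      have heq : n + (d+1) = (n+d) + 1 := rfl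
      rw [heq]
      by_cases hsk : e.sched (n+d) = i
      · have hstep := e.step (n+d)
        rw [hsk] at hstep
        rcases BW.entry_step hstep ihd with h' | ⟨s, c, m, h'⟩
        · exact h'
        · exact absurd ⟨s, c, m, h'⟩ (hcon (n+d+1) (by omega))
      · rw [(BW.step_frame (e.step (n+d)) i (fun hh => hsk hh.symm)).1]
        exact ihd
  have hnr : ∀ t, n ≤ t → (e.state t).pc i ≠ BWPc.remainder := by
    intro t ht hL
    have := hE t ht
    rw [hL] at this
    exact this
  -- i's pc stabilizes at time Ti
  obtain ⟨Ti, hTin, hTi⟩ := BW.stabilizes (e := e) i n hnr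
  have hStucki : BW.Stuck e i := ⟨Ti, hTi⟩
  obtain ⟨sI, cI, mI, κI, hIshape⟩ :
      ∃ sI cI mI κI, (e.state Ti).pc i = BWPc.w1 sI cI mI κI ∨
        (e.state Ti).pc i = BWPc.wSame sI cI mI κI ∨
        (e.state Ti).pc i = BWPc.wDiff sI cI mI κI := by
    obtain ⟨v, -, hvTi, hvi, hpcv, hpcv1⟩ := BW.sched_const hTi (hnr Ti hTin) 0
    have hstep := e.step v
    rw [hvi] at hstep
    rcases BW.stutter_cases hstep (BW.Inv_exec e v) (by rw [hpcv1, hpcv]) with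
      h0 | ⟨s', c', m', h0⟩ | ⟨s', c', m', κ', hκ', h0, -⟩ | ⟨s', c', m', κ', hκ', h0, -⟩ |
      ⟨s', c', m', κ', hκ', h0, -⟩
    · exact absurd h0 (hnr v (by omega))
    · exact absurd ⟨s', c', m', h0⟩ (hcon v (by omega))
    · exact ⟨s', c', m', κ', Or.inl (by rw [← hpcv, h0])⟩
    · exact ⟨s', c', m', κ', Or.inr (Or.inl (by rw [← hpcv, h0]))⟩
    · exact ⟨s', c', m', κ', Or.inr (Or.inr (by rw [← hpcv, h0]))⟩
  -- i's token is constant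
  have hIi := (BW.Inv_exec e Ti) i
  have htoki : (e.state Ti).token i = ⟨sI, some cI, mI⟩ ∧ 0 < sI := by
    rcases hIshape with h0 | h0 | h0 <;> rw [h0] at hIi <;>
      simp only [BW.pcInv] at hIi <;> exact ⟨hIi.1, hIi.2.2.1⟩
  have htokconst : ∀ t, Ti ≤ t → (e.state t).token i = ⟨sI, some cI, mI⟩ := by
    intro t ht
    rw [(BW.const_components hTi t ht).1, htoki.1]
  -- GlobalColor stabilizes
  obtain ⟨T1, hT1Ti, hT1⟩ := BW.gcolor_stable (e := e) i Ti sI cI mI htokconst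
    (by have := htoki.2; omega)
  -- stabilization times for all stuck processes
  have hτ : ∀ jj : Fin N, ∃ τ, BW.Stuck e jj →
      ∀ t, τ ≤ t → (e.state t).pc jj = (e.state τ).pc jj := by
    intro jj
    by_cases hS : BW.Stuck e jj
    · obtain ⟨T, hT⟩ := hS
      exact ⟨T, fun _ => hT⟩
    · exact ⟨0, fun hs => absurd hs hS⟩
  choose τ hτs using hτ
  set Ts : ℕ := max (max T1 Ti) (Finset.univ.sup τ) with hTs
  have hTsT1 : T1 ≤ Ts := le_trans (le_max_left _ _) (le_max_left _ _)
  have hTsTi : Ti ≤ Ts := le_trans (le_max_right _ _) (le_max_left _ _)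
  have hStab : ∀ jj : Fin N, BW.Stuck e jj →
      ∀ t, Ts ≤ t → (e.state t).pc jj = (e.state Ts).pc jj := by
    intro jj hS t ht
    have hτle : τ jj ≤ Ts := le_trans (Finset.le_sup (Finset.mem_univ jj)) (le_max_right _ _)
    rw [hτs jj hS t (by omega), hτs jj hS Ts hτle]
  set g : Color := (e.state Ts).gcolor with hgdef
  have hg : ∀ t, Ts ≤ t → (e.state t).gcolor = g := by
    intro t ht
    rw [hT1 t (by omega), ← hT1 Ts (by omega)]
  -- i is parked at Ts too
  have hpciTs : (e.state Ts).pc i = (e.state Ti).pc i := hTi Ts hTsTi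
  set W : Fin N → ℕ → Color → ℕ → ℕ → Prop := fun q sq cq mq κq =>
    BW.Stuck e q ∧ ((e.state Ts).pc q = BWPc.w1 sq cq mq κq ∨
      (e.state Ts).pc q = BWPc.wSame sq cq mq κq ∨
      (e.state Ts).pc q = BWPc.wDiff sq cq mq κq) with hW
  have hiW : W i sI cI mI κI := ⟨hStucki, by rw [hpciTs]; exact hIshape⟩
  -- generic descent
  have descent : ∀ c0 : Color,
      (¬ ∃ q : Fin N, ∃ sq mq κq, W q sq (Color.opp c0) mq κq) ∨ (c0 = g.opp) →
      ∀ (q : Fin N) sq mq κq, W q sq c0 mq κq →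
      ∃ q' : Fin N, ∃ sq' mq' κq', W q' sq' c0 mq' κq' ∧
        (mq' < mq ∨ (mq' = mq ∧ q'.val < q.val)) := by
    intro c0 hside q sq mq κq ⟨hSq, hshape⟩
    rcases hshape with h0 | h0 | h0
    · exact absurd (BW.w1_impossible hncs hStab hg hSq h0) (by simp)
    · obtain ⟨q', sq', mq', κq', hSq', hshape', hlt⟩ :=
        BW.wSame_pointer hncs hStab hg hSq h0
      exact ⟨q', sq', mq', κq', ⟨hSq', hshape'⟩, hlt⟩
    · obtain ⟨hgc, q', sq', cq', mq', κq', hSq', hshape', hne⟩ :=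
        BW.wDiff_pointer hncs hStab hg hSq h0
      exfalso
      rcases hside with hnoopp | hopp
      · exact hnoopp ⟨q', sq', mq', κq', hSq', by
          rw [BW.color_eq_opp_of_ne hne] at hshape'
          exact hshape'⟩
      · rw [hopp] at hgc
        exact BW.color_opp_ne g hgc.symm
  -- no process is parked with color `g.opp`
  have noOpp : ¬ ∃ q : Fin N, ∃ sq mq κq, W q sq (Color.opp g) mq κq := by
    rintro ⟨q, sq, mq, κq, hq⟩
    exact BW.no_min (P := fun q sq mq κq => W q sq (Color.opp g) mq κq)
      (descent g.opp (Or.inr rfl)) q sq mq κq hq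
  -- hence no process is parked with color `g` either
  have noG : ¬ ∃ q : Fin N, ∃ sq mq κq, W q sq g mq κq := by
    rintro ⟨q, sq, mq, κq, hq⟩
    exact BW.no_min (P := fun q sq mq κq => W q sq g mq κq)
      (descent g (Or.inl noOpp)) q sq mq κq hq
  -- contradiction: i is parked with some color
  by_cases hci : cI = g
  · exact noG ⟨i, sI, mI, κI, hci ▸ hiW⟩
  · exact noOpp ⟨i, sI, mI, κI, (BW.color_eq_opp_of_ne hci) ▸ hiW⟩

/-- **Starvation freedom for the BWBGME algorithm.**  In every execution in which no
process stays in the critical section forever, every process that enters the entry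
section eventually enters the critical section. -/
theorem bw_starvation_freedom {N : ℕ} (e : BWExec N)
    (hncs : ∀ (i : Fin N) (n : ℕ), bwInCS (e.state n) i →
      ∃ m, n ≤ m ∧ ¬ bwInCS (e.state m) i)
    (i : Fin N) (n : ℕ) (h : bwInEntry (e.state n) i) :
    ∃ m, n ≤ m ∧ bwInCS (e.state m) i :=
  bw_starvation_freedom' e hncs i n h
end
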